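/- arXiv:1903.06426 — 5 statements merged into one kernel-verified Lean document; each statement's English description precedes it below -/
import Mathlib

section
/- For every n ≥ 1, the map f from the partition lattice P_n to the lattice of 𝔽_2-subspaces of 𝔽_2^{n−1} is a rank-preserving poset embedding: (i) if π ≤ σ in refinement order then f(π) ⊆ f(σ); (ii) f is injective; and (iii) dim_{𝔽_2} f(π) = n − (number of blocks of π) for every partition π. -/
/-- The vector `e_i ∈ 𝔽₂ⁿ⁻¹` for `i` among the first `n-1` indices, and `0` for the
last index (`e_n := 0`). -/
def unitVec (n : ℕ) (i : Fin n) : Fin (n - 1) → ZMod 2 :=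
  fun k => if (k : ℕ) = (i : ℕ) then 1 else 0

/-- The subspace of `𝔽₂ⁿ⁻¹` associated to a set partition of `{1, …, n}`
(encoded as a `Setoid` on `Fin n`): the span of the partition vectors
`e_i + e_j` over all pairs `i < j` lying in a common block. -/
def partSubspace (n : ℕ) (π : Setoid (Fin n)) :
    Submodule (ZMod 2) (Fin (n - 1) → ZMod 2) :=
  Submodule.span (ZMod 2)
    {x | ∃ i j : Fin n, i < j ∧ π.r i j ∧ x = unitVec n i + unitVec n j}

attribute [local instance] Classical.propDecidable

namespace PartEmb

variable {n : ℕ}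

/-- the last index of `Fin n` -/
def lst (hn : 1 ≤ n) : Fin n := ⟨n - 1, Nat.sub_lt hn one_pos⟩

lemma unitVec_lst (hn : 1 ≤ n) : unitVec n (lst hn) = 0 := by
  funext k
  have hk : (k : ℕ) < n - 1 := k.isLt
  simp only [unitVec, lst]
  split_ifs with h
  · omega
  simp [h]

lemma unitVec_add_self (i : Fin n) : unitVec n i + unitVec n i = 0 := by
  funext k
  simp only [Pi.add_apply, Pi.zero_apply, CharTwo.add_self_eq_zero]

/-- the linear functional summing coordinates in the block of `a`, with the
phantom last coordinate recovered as the sum of all coordinates. -/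
noncomputable def psi (hn : 1 ≤ n) (π : Setoid (Fin n)) (a : Fin n) :
    (Fin (n - 1) → ZMod 2) →ₗ[ZMod 2] ZMod 2 :=
  ∑ k : Fin (n - 1),
    ((if π.r (Fin.castLE (Nat.sub_le n 1) k) a then (1 : ZMod 2) else 0)
      + (if π.r (lst hn) a then 1 else 0)) • LinearMap.proj k

lemma psi_apply (hn : 1 ≤ n) (π : Setoid (Fin n)) (a : Fin n) (x : Fin (n - 1) → ZMod 2) :
    psi hn π a x = ∑ k : Fin (n - 1),
      ((if π.r (Fin.castLE (Nat.sub_le n 1) k) a then (1 : ZMod 2) else 0)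
        + (if π.r (lst hn) a then 1 else 0)) * x k := by
  simp [psi, smul_eq_mul]

lemma psi_unitVec (hn : 1 ≤ n) (π : Setoid (Fin n)) (a i : Fin n) :
    psi hn π a (unitVec n i) =
      (if π.r i a then (1 : ZMod 2) else 0) + (if π.r (lst hn) a then 1 else 0) := by
  rw [psi_apply]
  by_cases hi : (i : ℕ) < n - 1
  · rw [Finset.sum_eq_single (⟨(i : ℕ), hi⟩ : Fin (n - 1))]
    · have : Fin.castLE (Nat.sub_le n 1) (⟨(i : ℕ), hi⟩ : Fin (n - 1)) = i := by
        apply Fin.ext; rfl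
      rw [this]
      simp [unitVec]
    · intro b _ hb
      have : (b : ℕ) ≠ (i : ℕ) := fun h => hb (Fin.ext h)
      simp [unitVec, this]
    · intro h; exact absurd (Finset.mem_univ _) h
  · have hi' : i = lst hn := by
      apply Fin.ext; have := i.isLt; simp only [lst]; omega
    subst hi'
    rw [unitVec_lst]
    have : ∀ k : Fin (n - 1),
        ((if π.r (Fin.castLE (Nat.sub_le n 1) k) (a) then (1 : ZMod 2) else 0)
          + (if π.r (lst hn) a then 1 else 0)) * (0 : ZMod 2) = 0 := by
      intro k; ring
    simp only [Pi.zero_apply, mul_zero, Finset.sum_const_zero]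
    rw [CharTwo.add_self_eq_zero]

lemma partSubspace_le_ker (hn : 1 ≤ n) (π : Setoid (Fin n)) (a : Fin n) :
    partSubspace n π ≤ LinearMap.ker (psi hn π a) := by
  rw [partSubspace, Submodule.span_le]
  rintro x ⟨i, j, hij, hrel, rfl⟩
  simp only [SetLike.mem_coe, LinearMap.mem_ker, map_add, psi_unitVec]
  have h1 : π.r i a ↔ π.r j a :=
    ⟨fun h => π.trans (π.symm hrel) h, fun h => π.trans hrel h⟩
  rw [if_congr h1 rfl rfl, add_add_add_comm, CharTwo.add_self_eq_zero,
    CharTwo.add_self_eq_zero, add_zero]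

lemma rel_of_mem (hn : 1 ≤ n) (π : Setoid (Fin n)) {i j : Fin n}
    (h : unitVec n i + unitVec n j ∈ partSubspace n π) : π.r i j := by
  have h' := partSubspace_le_ker hn π i h
  simp only [LinearMap.mem_ker, map_add, psi_unitVec, if_pos (π.refl i)] at h'
  by_cases hj : π.r j i
  · exact π.symm hj
  · exfalso
    rw [if_neg hj] at h'
    have hri : π.r i i := π.refl i
    by_cases hl : π.r (lst hn) i <;> simp only [hri, hl, if_true, if_false] at h' <;>
      revert h' <;> decide

lemma mem_gen (π : Setoid (Fin n)) {i j : Fin n} (hne : i ≠ j) (hrel : π.r i j) :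
    unitVec n i + unitVec n j ∈ partSubspace n π := by
  rcases lt_or_gt_of_ne hne with h | h
  · exact Submodule.subset_span ⟨i, j, h, hrel, rfl⟩
  · rw [add_comm]
    exact Submodule.subset_span ⟨j, i, h, π.symm hrel, rfl⟩

/-! ### representatives -/

noncomputable def rep (hn : 1 ≤ n) (π : Setoid (Fin n)) (i : Fin n) : Fin n :=
  if π.r i (lst hn) then lst hn else (Quotient.mk π i).out

lemma rep_rel (hn : 1 ≤ n) (π : Setoid (Fin n)) (i : Fin n) : π.r (rep hn π i) i := by
  unfold rep
  split
  · exact π.symm ‹_›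
  · exact Quotient.mk_out i

lemma rep_eq_of_rel (hn : 1 ≤ n) (π : Setoid (Fin n)) {i j : Fin n} (h : π.r i j) :
    rep hn π i = rep hn π j := by
  unfold rep
  have h1 : π.r i (lst hn) ↔ π.r j (lst hn) :=
    ⟨fun h2 => π.trans (π.symm h) h2, fun h2 => π.trans h h2⟩
  by_cases hc : π.r i (lst hn)
  · rw [if_pos hc, if_pos (h1.mp hc)]
  · rw [if_neg hc, if_neg (fun h2 => hc (h1.mpr h2))]
    congr 1
    exact Quotient.sound h

lemma rep_rep (hn : 1 ≤ n) (π : Setoid (Fin n)) (i : Fin n) :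
    rep hn π (rep hn π i) = rep hn π i :=
  rep_eq_of_rel hn π (rep_rel hn π i)

lemma rep_lst (hn : 1 ≤ n) (π : Setoid (Fin n)) : rep hn π (lst hn) = lst hn := by
  unfold rep; exact if_pos (π.refl _)

noncomputable def gvec (hn : 1 ≤ n) (π : Setoid (Fin n)) (i : Fin n) :
    Fin (n - 1) → ZMod 2 :=
  unitVec n i + unitVec n (rep hn π i)

lemma span_gvec (hn : 1 ≤ n) (π : Setoid (Fin n)) :
    Submodule.span (ZMod 2) (Set.range (gvec hn π)) = partSubspace n π := by
  apply le_antisymm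
  · rw [Submodule.span_le]
    rintro x ⟨i, rfl⟩
    by_cases h : rep hn π i = i
    · simp only [gvec, h, unitVec_add_self]
      exact Submodule.zero_mem _
    · exact mem_gen π (fun he => h he.symm) (π.symm (rep_rel hn π i))
  · rw [partSubspace, Submodule.span_le]
    rintro x ⟨i, j, hij, hrel, rfl⟩
    have hr : rep hn π i = rep hn π j := rep_eq_of_rel hn π hrel
    have : unitVec n i + unitVec n j = gvec hn π i + gvec hn π j := by
      simp only [gvec, hr]
      rw [add_add_add_comm, unitVec_add_self, add_zero]
    rw [this]
    exact Submodule.add_mem _ (Submodule.subset_span ⟨i, rfl⟩)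
      (Submodule.subset_span ⟨j, rfl⟩)

lemma gvec_coord (hn : 1 ≤ n) (π : Setoid (Fin n)) (j : Fin n) (k : Fin (n - 1)) :
    gvec hn π j k =
      (if (k : ℕ) = (j : ℕ) then (1 : ZMod 2) else 0)
        + (if (k : ℕ) = ((rep hn π j : Fin n) : ℕ) then 1 else 0) := rfl

noncomputable def sset (hn : 1 ≤ n) (π : Setoid (Fin n)) : Finset (Fin n) :=
  Finset.univ.filter (fun i => rep hn π i ≠ i)

lemma linIndep (hn : 1 ≤ n) (π : Setoid (Fin n)) :
    LinearIndependent (ZMod 2) (fun j : {x // x ∈ sset hn π} => gvec hn π j.1) := by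
  rw [Fintype.linearIndependent_iff]
  intro c hc j0
  obtain ⟨j0, hj0⟩ := j0
  have hfix : rep hn π j0 ≠ j0 := by simpa [sset] using hj0
  have hlt : (j0 : ℕ) < n - 1 := by
    have h3 : j0 ≠ lst hn := fun h => hfix (h ▸ rep_lst hn π)
    have h2 := j0.isLt
    have h4 : (j0 : ℕ) ≠ n - 1 := fun h => h3 (Fin.ext (by simp [lst, h]))
    omega
  have h1 := congrFun hc ⟨(j0 : ℕ), hlt⟩
  simp only [Finset.sum_apply, Pi.smul_apply, smul_eq_mul, Pi.zero_apply, gvec_coord] at h1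
  rw [Finset.sum_eq_single (⟨j0, hj0⟩ : {x // x ∈ sset hn π})] at h1
  · have hne0 : (j0 : ℕ) ≠ ((rep hn π j0 : Fin n) : ℕ) := fun h => hfix (Fin.ext h.symm)
    simpa [hne0] using h1
  · intro b _ hb
    obtain ⟨b, hb'⟩ := b
    have hbf : rep hn π b ≠ b := by simpa [sset] using hb'
    have hne1 : (j0 : ℕ) ≠ (b : ℕ) := fun h => hb (Subtype.ext (Fin.ext h.symm))
    have hne2 : (j0 : ℕ) ≠ ((rep hn π b : Fin n) : ℕ) := by
      intro h
      have h5 : rep hn π b = j0 := Fin.ext h.symm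
      have h6 := rep_rep hn π b
      rw [h5] at h6
      exact hfix h6
    simp [hne1, hne2]
  · simp

lemma card_sset (hn : 1 ≤ n) (π : Setoid (Fin n)) :
    (sset hn π).card = n - Nat.card (Quotient π) := by
  classical
  set t : Finset (Fin n) := Finset.univ.filter (fun i => rep hn π i = i) with ht
  have hcompl : t = (sset hn π)ᶜ := by
    ext i; simp [t, sset]
  have hcardq : Nat.card (Quotient π) = t.card := by
    have hbij : Function.Bijective (fun i : {x // x ∈ t} => Quotient.mk π i.1) := by
      constructor
      · rintro ⟨a, ha⟩ ⟨b, hb⟩ h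
        have hrel : π.r a b := Quotient.exact h
        have heq : rep hn π a = rep hn π b := rep_eq_of_rel hn π hrel
        simp only [t, Finset.mem_filter, Finset.mem_univ, true_and] at ha hb
        refine Subtype.ext ?_
        show a = b
        rw [← ha, ← hb, heq]
      · intro q
        refine ⟨⟨rep hn π q.out, ?_⟩, ?_⟩
        · simp [t, rep_rep]
        · have hr : π.r (rep hn π q.out) q.out := rep_rel hn π q.out
          calc Quotient.mk π (rep hn π q.out) = Quotient.mk π q.out := Quotient.sound hr
            _ = q := q.out_eq
    rw [← Nat.card_eq_of_bijective _ hbij, Nat.card_eq_fintype_card, Fintype.card_coe]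
  have hle : (sset hn π).card ≤ n := by
    have := Finset.card_le_univ (sset hn π)
    simpa using this
  have hc : t.card = n - (sset hn π).card := by
    rw [hcompl, Finset.card_compl, Fintype.card_fin]
  omega
end PartEmb

/-- The map from the partition lattice `Pₙ` (partitions of `{1, …, n}` ordered by
refinement) to the lattice of subspaces of `𝔽₂ⁿ⁻¹` is a rank-preserving poset
embedding: it is order-preserving, injective, and the dimension of the image of a
partition `π` is `n` minus the number of blocks of `π`. -/
theorem partitionLattice_embedding (n : ℕ) (hn : 1 ≤ n) :
    (∀ π σ : Setoid (Fin n), π ≤ σ → partSubspace n π ≤ partSubspace n σ) ∧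
      Function.Injective (partSubspace n) ∧
      ∀ π : Setoid (Fin n),
        Module.finrank (ZMod 2) (partSubspace n π) = n - Nat.card (Quotient π) := by
  classical
  refine ⟨?_, ?_, ?_⟩
  · intro π σ h
    apply Submodule.span_mono
    rintro x ⟨i, j, hij, hr, rfl⟩
    exact ⟨i, j, hij, h hr, rfl⟩
  · have key : ∀ π σ : Setoid (Fin n), partSubspace n π = partSubspace n σ →
        ∀ a b, π.r a b → σ.r a b := by
      intro π σ h a b hab
      by_cases hne : a = b
      · subst hne; exact σ.refl a
      · exact PartEmb.rel_of_mem hn σ (h ▸ PartEmb.mem_gen π hne hab)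
    intro π σ h
    exact Setoid.ext fun a b => ⟨key π σ h a b, key σ π h.symm a b⟩
  · intro π
    have hspan : Submodule.span (ZMod 2)
        (Set.range fun j : {x // x ∈ PartEmb.sset hn π} => PartEmb.gvec hn π j.1)
          = partSubspace n π := by
      rw [← PartEmb.span_gvec hn π]
      apply le_antisymm
      · apply Submodule.span_mono
        rintro x ⟨j, rfl⟩
        exact ⟨j.1, rfl⟩
      · rw [Submodule.span_le]
        rintro x ⟨i, rfl⟩
        by_cases h : PartEmb.rep hn π i = i
        · rw [show PartEmb.gvec hn π i = 0 by
            simp [PartEmb.gvec, h, PartEmb.unitVec_add_self]]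
          exact Submodule.zero_mem _
        · exact Submodule.subset_span ⟨⟨i, by simp [PartEmb.sset, h]⟩, rfl⟩
    have hfr := finrank_span_eq_card (PartEmb.linIndep hn π)
    rw [hspan] at hfr
    rw [hfr, Fintype.card_coe, PartEmb.card_sset]
end

section
/- Let n ≥ 2 and let p be any prime. For a transposition t = (i j) of S_n with i < j, set α_t := e_i − e_j ∈ 𝔽_p^{n−1} if j < n and α_t := e_i if j = n, where e_1, …, e_{n−1} is the standard basis of 𝔽_p^{n−1}. Then the map sending w ∈ NC(S_n) to the p-moved space M_p(w) := span_{𝔽_p}{α_t : t a transposition with t ≤ w in absolute order} is a rank-preserving poset embedding: it is order-preserving, injective, and dim_{𝔽_p} M_p(w) = ℓ(w) for all w ∈ NC(S_n). -/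
/-- The absolute length of `w` with respect to a set `T`:
the least `k` such that `w` is a product of `k` elements of `T`. -/
noncomputable def absLength {G : Type*} [Group G] (T : Set G) (w : G) : ℕ :=
  sInf {k : ℕ | ∃ l : List G, l.length = k ∧ (∀ t ∈ l, t ∈ T) ∧ l.prod = w}

/-- The absolute order with respect to `T` : `u ≤ w` iff `ℓ(w) = ℓ(u) + ℓ(u⁻¹w)`. -/
def absLe {G : Type*} [Group G] (T : Set G) (u w : G) : Prop :=
  absLength T w = absLength T u + absLength T (u⁻¹ * w)

/-- The vector `e_i ∈ 𝔽ₚⁿ⁻¹` for `i` among the first `n-1` indices, and `0` for the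
last index (`e_n := 0`). -/
def vecP (p n : ℕ) (i : Fin n) : Fin (n - 1) → ZMod p :=
  fun k => if (k : ℕ) = (i : ℕ) then 1 else 0

/-- The `p`-moved space of a permutation `w` of `{1, …, n}`: the span of the roots
`α_t = e_i - e_j` (with `e_n := 0`) over all transpositions `t = (i j)`, `i < j`,
with `t ≤ w` in the absolute order. -/
noncomputable def pMovedSpace (p n : ℕ) (w : Equiv.Perm (Fin n)) :
    Submodule (ZMod p) (Fin (n - 1) → ZMod p) :=
  Submodule.span (ZMod p)
    {x | ∃ i j : Fin n, i < j ∧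
        absLe {t : Equiv.Perm (Fin n) | t.IsSwap} (Equiv.swap i j) w ∧
        x = vecP p n i - vecP p n j}

open Equiv Equiv.Perm Module


namespace NCA


variable {n : ℕ}

abbrev T (n : ℕ) : Set (Perm (Fin n)) := {t : Perm (Fin n) | t.IsSwap}

noncomputable abbrev ell (w : Perm (Fin n)) : ℕ := absLength (T n) w

lemma lset_nonempty (w : Perm (Fin n)) :
    {k : ℕ | ∃ l : List (Perm (Fin n)), l.length = k ∧ (∀ t ∈ l, t ∈ T n) ∧ l.prod = w}.Nonempty := by
  obtain ⟨l, hl1, hl2⟩ := (truncSwapFactors w).out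
  exact ⟨l.length, l, rfl, fun t ht => hl2 t ht, hl1⟩

lemma ell_spec (w : Perm (Fin n)) :
    ∃ l : List (Perm (Fin n)), l.length = ell w ∧ (∀ t ∈ l, t ∈ T n) ∧ l.prod = w :=
  Nat.sInf_mem (lset_nonempty w)

lemma ell_le {w : Perm (Fin n)} {l : List (Perm (Fin n))} (h1 : ∀ t ∈ l, t ∈ T n)
    (h2 : l.prod = w) : ell w ≤ l.length :=
  Nat.sInf_le ⟨l, rfl, h1, h2⟩

lemma ell_one : ell (1 : Perm (Fin n)) = 0 :=
  Nat.le_zero.mp (ell_le (l := []) (by simp) (by simp))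

lemma ell_eq_zero {w : Perm (Fin n)} (h : ell w = 0) : w = 1 := by
  obtain ⟨l, hl, -, hp⟩ := ell_spec w
  rw [h, List.length_eq_zero_iff] at hl
  simp [hl] at hp; exact hp.symm

lemma swap_ne_one' {a b : Fin n} (h : a ≠ b) : swap a b ≠ 1 := by
  intro hc
  have := congrArg (fun f : Perm (Fin n) => f a) hc
  simp only [swap_apply_left, Perm.one_apply] at this
  exact h this.symm

lemma ell_swap {a b : Fin n} (h : a ≠ b) : ell (swap a b) = 1 := by
  have h1 : ell (swap a b) ≤ 1 := ell_le (l := [swap a b]) (by simp [T, IsSwap]; exact ⟨a, b, h, rfl⟩) (by simp)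
  have h0 : ell (swap a b) ≠ 0 := fun hc => (swap_ne_one' h) (ell_eq_zero hc)
  omega

lemma ell_mul_le (u v : Perm (Fin n)) : ell (u * v) ≤ ell u + ell v := by
  obtain ⟨l1, h1, h2, h3⟩ := ell_spec u
  obtain ⟨l2, h4, h5, h6⟩ := ell_spec v
  calc ell (u * v) ≤ (l1 ++ l2).length := ell_le (by intro t ht; rcases List.mem_append.mp ht with h | h; exacts [h2 t h, h5 t h]) (by rw [List.prod_append, h3, h6])
  _ = ell u + ell v := by simp [h1, h4]

lemma ell_inv (u : Perm (Fin n)) : ell u⁻¹ = ell u := by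
  have key : ∀ v : Perm (Fin n), ell v⁻¹ ≤ ell v := by
    intro v
    obtain ⟨l, h1, h2, h3⟩ := ell_spec v
    refine le_trans (ell_le (l := (l.map Inv.inv).reverse) ?_ ?_) ?_
    · intro t ht
      rw [List.mem_reverse, List.mem_map] at ht
      obtain ⟨s, hs, rfl⟩ := ht
      obtain ⟨a, b, hab, rfl⟩ := h2 s hs
      exact ⟨a, b, hab, by rw [swap_inv]⟩
    · rw [← List.prod_inv_reverse, h3]
    · simp [h1]
  exact le_antisymm (key u) (by simpa using key u⁻¹)

lemma ell_triangle (u w : Perm (Fin n)) : ell w ≤ ell u + ell (u⁻¹ * w) := by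
  simpa using ell_mul_le u (u⁻¹ * w)

lemma absLe_trans {t u w : Perm (Fin n)} (h1 : absLe (T n) t u) (h2 : absLe (T n) u w) :
    absLe (T n) t w := by
  unfold absLe at *
  have h1' : ell u = ell t + ell (t⁻¹ * u) := h1
  have h2' : ell w = ell u + ell (u⁻¹ * w) := h2
  show ell w = ell t + ell (t⁻¹ * w)
  have e2 : ell (t⁻¹ * w) ≤ ell (t⁻¹ * u) + ell (u⁻¹ * w) := by
    simpa [mul_assoc] using ell_mul_le (t⁻¹ * u) (u⁻¹ * w)
  have e3 := ell_triangle t w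
  omega

lemma sign_ell (w : Perm (Fin n)) : Perm.sign w = (-1) ^ ell w := by
  obtain ⟨l, h1, h2, h3⟩ := ell_spec w
  conv_lhs => rw [← h3]
  rw [sign_prod_list_swap h2, h1]





section FixedSpace

variable (K : Type*) [Field K]

/-- The fixed space of a permutation acting on `Fin n → K`. -/
def Fx (w : Perm (Fin n)) : Submodule K (Fin n → K) where
  carrier := {x | ∀ k, x (w k) = x k}
  add_mem' := fun hx hy k => by simp [hx k, hy k]
  zero_mem' := fun k => rfl
  smul_mem' := fun c x hx k => by simp [hx k]

lemma mem_Fx {w : Perm (Fin n)} {x : Fin n → K} : x ∈ Fx K w ↔ ∀ k, x (w k) = x k := Iff.rfl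

lemma Fx_one : Fx K (1 : Perm (Fin n)) = ⊤ := by
  ext x; simp [mem_Fx]

lemma Fx_inf_le_mul (u v : Perm (Fin n)) : Fx K u ⊓ Fx K v ≤ Fx K (u * v) := by
  rintro x ⟨hxu, hxv⟩ k
  rw [Perm.mul_apply, hxu (v k), hxv k]

lemma Fx_pow_apply {w : Perm (Fin n)} {x : Fin n → K} (hx : x ∈ Fx K w) (m : ℕ) (i : Fin n) :
    x ((w ^ m) i) = x i := by
  induction m with
  | zero => simp
  | succ m ih => rw [pow_succ', Perm.mul_apply, hx ((w ^ m) i), ih]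

lemma Fx_sameCycle {w : Perm (Fin n)} {x : Fin n → K} (hx : x ∈ Fx K w) {i j : Fin n}
    (h : w.SameCycle i j) : x i = x j := by
  obtain ⟨m, -, hm⟩ := h.exists_pow_eq'
  rw [← hm, Fx_pow_apply K hx]

lemma mem_Fx_swap {a b : Fin n} {x : Fin n → K} (h : x a = x b) : x ∈ Fx K (swap a b) := by
  intro k
  rcases eq_or_ne k a with rfl | hka
  · rw [swap_apply_left]; exact h.symm
  rcases eq_or_ne k b with rfl | hkb
  · rw [swap_apply_right]; exact h
  · rw [swap_apply_of_ne_of_ne hka hkb]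

/-- dimension of fixed space of a swap. -/
lemma finrank_Fx_swap {a b : Fin n} (h : a ≠ b) :
    finrank K (Fx K (swap a b)) = n - 1 := by
  classical
  set φ : (Fin n → K) →ₗ[K] K := (LinearMap.proj a : (Fin n → K) →ₗ[K] K) - (LinearMap.proj b : (Fin n → K) →ₗ[K] K) with hφ
  have hker : Fx K (swap a b) = LinearMap.ker φ := by
    ext x
    simp only [LinearMap.mem_ker, hφ, LinearMap.sub_apply, LinearMap.proj_apply, sub_eq_zero]
    constructor
    · intro hx
      have := hx a
      rw [swap_apply_left] at this
      exact this.symm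
    · intro hx
      exact mem_Fx_swap K hx
  have hrange : LinearMap.range φ = ⊤ := by
    rw [Submodule.eq_top_iff']
    intro c
    have h1 : φ (Pi.single a c) = c := by
      simp [hφ, Pi.single_apply, h, h.symm]
    exact ⟨Pi.single a c, h1⟩
  have := LinearMap.finrank_range_add_finrank_ker φ
  rw [hrange, finrank_top, Module.finrank_self, Module.finrank_pi, Fintype.card_fin] at this
  rw [hker]
  omega

lemma finrank_Fx_le (w : Perm (Fin n)) : finrank K (Fx K w) ≤ n := by
  have := Submodule.finrank_le (Fx K w)
  rwa [Module.finrank_pi, Fintype.card_fin] at this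

lemma n_le_finrank_add_len (l : List (Perm (Fin n))) (hl : ∀ t ∈ l, t.IsSwap) :
    n ≤ finrank K (Fx K l.prod) + l.length := by
  induction l with
  | nil =>
    rw [List.prod_nil, Fx_one, finrank_top, Module.finrank_pi, Fintype.card_fin]
    simp
  | cons t l ih =>
    have ht : t.IsSwap := hl t List.mem_cons_self
    obtain ⟨a, b, hab, rfl⟩ := ht
    have ih' := ih (fun s hs => hl s (List.mem_cons_of_mem _ hs))
    have hsup : finrank K ↥(Fx K (swap a b) ⊔ Fx K l.prod) ≤ n := by
      have := Submodule.finrank_le (Fx K (swap a b) ⊔ Fx K l.prod)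
      rwa [Module.finrank_pi, Fintype.card_fin] at this
    have heq := Submodule.finrank_sup_add_finrank_inf_eq (Fx K (swap a b)) (Fx K l.prod)
    have hmono : finrank K ↥(Fx K (swap a b) ⊓ Fx K l.prod) ≤
        finrank K ↥(Fx K ((swap a b) * l.prod)) :=
      Submodule.finrank_mono (Fx_inf_le_mul K _ _)
    rw [finrank_Fx_swap K hab] at heq
    rw [List.prod_cons, List.length_cons]
    omega

end FixedSpace

section Char

variable (K : Type*) [Field K]

lemma Fx_le_of_sameCycle {w : Perm (Fin n)} {a b : Fin n} (h : w.SameCycle a b) :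
    Fx K w ≤ Fx K (swap a b * w) := by
  intro x hx
  exact Fx_inf_le_mul K _ _ ⟨mem_Fx_swap K (Fx_sameCycle K hx h), hx⟩

lemma single_mem_Fx {u : Perm (Fin n)} {a : Fin n} (hua : u a = a) :
    Pi.single a (1 : K) ∈ Fx K u := by
  intro k
  have hiff : u k = a ↔ k = a := by
    constructor
    · intro h; exact u.injective (by rw [hua, h])
    · rintro rfl; exact hua
  simp only [Pi.single_apply, hiff]

lemma single_not_mem_Fx {w : Perm (Fin n)} {a : Fin n} (hwa : w a ≠ a) :
    Pi.single a (1 : K) ∉ Fx K w := by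
  intro hx
  have := hx a
  rw [Pi.single_apply, Pi.single_apply, if_neg hwa, if_pos rfl] at this
  exact zero_ne_one this

lemma dF_lt_of_ne {w : Perm (Fin n)} {a : Fin n} (hwa : w a ≠ a) :
    finrank K (Fx K w) < finrank K (Fx K (swap a (w a) * w)) := by
  have hle : Fx K w ≤ Fx K (swap a (w a) * w) :=
    Fx_le_of_sameCycle K ⟨1, by simp⟩
  have hlt : Fx K w < Fx K (swap a (w a) * w) := by
    refine lt_of_le_of_ne hle (fun hEq => ?_)
    have hmem : Pi.single a (1 : K) ∈ Fx K (swap a (w a) * w) := by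
      apply single_mem_Fx
      rw [Perm.mul_apply, swap_apply_right]
    rw [← hEq] at hmem
    exact single_not_mem_Fx K hwa hmem
  exact Submodule.finrank_lt_finrank_of_lt hlt

lemma ell_le_n_sub_dF (w : Perm (Fin n)) : ell w ≤ n - finrank K (Fx K w) := by
  suffices H : ∀ m (w : Perm (Fin n)), n - finrank K (Fx K w) ≤ m →
      ell w ≤ n - finrank K (Fx K w) from H _ w le_rfl
  intro m
  induction m with
  | zero =>
    intro w hw
    have hdle := finrank_Fx_le K w
    have htop : Fx K w = ⊤ := by
      apply Submodule.eq_top_of_finrank_eq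
      rw [Module.finrank_pi, Fintype.card_fin]
      omega
    have hw1 : w = 1 := by
      ext a
      by_contra hwa
      exact single_not_mem_Fx K (a := a) (fun h => hwa (by rw [h]; rfl))
        (htop ▸ Submodule.mem_top)
    subst hw1
    simp [ell_one]
  | succ m ih =>
    intro w hw
    by_cases h1 : w = 1
    · subst h1; simp [ell_one]
    have hex : ∃ a, w a ≠ a := by
      by_contra hc; push_neg at hc
      exact h1 (Equiv.ext hc)
    obtain ⟨a, hwa⟩ := hex
    have hlt := dF_lt_of_ne K hwa
    have hun := finrank_Fx_le K (swap a (w a) * w)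
    have hu : ell (swap a (w a) * w) ≤ n - finrank K (Fx K (swap a (w a) * w)) :=
      ih _ (by omega)
    have hw' : w = swap a (w a) * (swap a (w a) * w) := by
      rw [← mul_assoc, swap_mul_self, one_mul]
    have hb : ell w ≤ 1 + ell (swap a (w a) * w) := by
      conv_lhs => rw [hw']
      have h2 := ell_mul_le (swap a (w a)) (swap a (w a) * w)
      rwa [ell_swap (fun h : a = w a => hwa h.symm)] at h2
    omega

lemma n_le_dF_add_ell (w : Perm (Fin n)) : n ≤ finrank K (Fx K w) + ell w := by
  obtain ⟨l, h1, h2, h3⟩ := ell_spec w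
  have := n_le_finrank_add_len K l h2
  rwa [h3, h1] at this

lemma dF_add_ell (w : Perm (Fin n)) : finrank K (Fx K w) + ell w = n := by
  have h1 := ell_le_n_sub_dF K w
  have h2 := n_le_dF_add_ell K w
  have h3 := finrank_Fx_le K w
  omega

lemma ell_mul_swap_ne {w : Perm (Fin n)} {a b : Fin n} (hab : a ≠ b) :
    ell (swap a b * w) ≠ ell w := by
  intro hEq
  have h1 := sign_ell (swap a b * w)
  rw [Perm.sign_mul, Perm.sign_swap hab, sign_ell w, hEq] at h1
  have h2 : (-1 : ℤ) * (((-1 : ℤˣ) ^ ell w : ℤˣ) : ℤ) = (((-1 : ℤˣ) ^ ell w : ℤˣ) : ℤ) := by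
    simpa using congrArg Units.val h1
  rcases Int.units_eq_one_or ((-1 : ℤˣ) ^ ell w) with h | h <;> rw [h] at h2 <;> norm_num at h2

lemma ell_mul_swap_dichotomy (w : Perm (Fin n)) {a b : Fin n} (hab : a ≠ b) :
    ell (swap a b * w) = ell w + 1 ∨ ell w = ell (swap a b * w) + 1 := by
  have h1 : ell (swap a b * w) ≤ 1 + ell w := by
    have := ell_mul_le (swap a b) w
    rwa [ell_swap hab] at this
  have h2 : ell w ≤ 1 + ell (swap a b * w) := by
    have h3 : w = swap a b * (swap a b * w) := by rw [← mul_assoc, swap_mul_self, one_mul]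
    conv_lhs => rw [h3]
    have := ell_mul_le (swap a b) (swap a b * w)
    rwa [ell_swap hab] at this
  have := ell_mul_swap_ne (w := w) hab
  omega

lemma sameCycle_of_not_sameCycle_mul_swap {w : Perm (Fin n)} {a b : Fin n} (hab : a ≠ b)
    (h : ¬ w.SameCycle a b) : (swap a b * w).SameCycle a b := by
  classical
  have hex : ∃ m, 0 < m ∧ (w ^ m) a = a :=
    ⟨orderOf w, orderOf_pos w, by rw [pow_orderOf_eq_one]; rfl⟩
  set m₀ := Nat.find hex with hm₀def
  obtain ⟨hm₀pos, hm₀⟩ := Nat.find_spec hex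
  have key : ∀ k, k ≤ m₀ - 1 → ((swap a b * w) ^ k) a = (w ^ k) a := by
    intro k
    induction k with
    | zero => simp
    | succ k ih =>
      intro hk
      have hk' : k ≤ m₀ - 1 := by omega
      rw [pow_succ', pow_succ', Perm.mul_apply, Perm.mul_apply, ih hk', Perm.mul_apply]
      have hya : w ((w ^ k) a) ≠ a := by
        intro hc
        have hmin := Nat.find_min hex (m := k + 1) (by omega)
        exact hmin ⟨by omega, by rw [pow_succ', Perm.mul_apply, hc]⟩
      have hyb : w ((w ^ k) a) ≠ b := by
        intro hc
        exact h ⟨(k + 1 : ℕ), by rw [zpow_natCast, pow_succ', Perm.mul_apply, hc]⟩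
      rw [swap_apply_of_ne_of_ne hya hyb]
  have hfin : ((swap a b * w) ^ m₀) a = b := by
    have hm1 : m₀ = (m₀ - 1) + 1 := by omega
    conv_lhs => rw [hm1, pow_succ', Perm.mul_apply]
    rw [key (m₀ - 1) le_rfl, Perm.mul_apply]
    have hlast : w ((w ^ (m₀ - 1)) a) = a := by
      rw [← Perm.mul_apply, ← pow_succ', ← hm1]
      exact hm₀
    rw [hlast, swap_apply_left]
  exact ⟨(m₀ : ℤ), by rw [zpow_natCast, hfin]⟩

lemma sameCycle_iff_ell_lt {w : Perm (Fin n)} {a b : Fin n} (hab : a ≠ b) :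
    w.SameCycle a b ↔ ell (swap a b * w) < ell w := by
  constructor
  · intro h
    have hle : finrank (ZMod 2) (Fx (ZMod 2) w) ≤ finrank (ZMod 2) (Fx (ZMod 2) (swap a b * w)) :=
      Submodule.finrank_mono (Fx_le_of_sameCycle (ZMod 2) h)
    have e1 := dF_add_ell (ZMod 2) w
    have e2 := dF_add_ell (ZMod 2) (swap a b * w)
    have := ell_mul_swap_ne (w := w) hab
    omega
  · intro hlt
    by_contra h
    have hsc := sameCycle_of_not_sameCycle_mul_swap hab h
    have hle : finrank (ZMod 2) (Fx (ZMod 2) (swap a b * w)) ≤ finrank (ZMod 2) (Fx (ZMod 2) w) := by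
      have := Submodule.finrank_mono (Fx_le_of_sameCycle (ZMod 2) hsc)
      rwa [← mul_assoc, swap_mul_self, one_mul] at this
    have e1 := dF_add_ell (ZMod 2) w
    have e2 := dF_add_ell (ZMod 2) (swap a b * w)
    omega

lemma sameCycle_iff_ell_lt_right {w : Perm (Fin n)} {a b : Fin n} (hab : a ≠ b) :
    w.SameCycle a b ↔ ell (w * swap a b) < ell w := by
  have h1 : ell (w * swap a b) = ell (swap a b * w⁻¹) := by
    rw [← ell_inv (w * swap a b), mul_inv_rev, swap_inv]
  rw [h1, ← ell_inv w, ← Equiv.Perm.sameCycle_inv]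
  exact sameCycle_iff_ell_lt hab

lemma absLe_swap_iff {w : Perm (Fin n)} {a b : Fin n} (hab : a ≠ b) :
    absLe (T n) (swap a b) w ↔ w.SameCycle a b := by
  unfold absLe
  have h2 : ((swap a b)⁻¹ * w) = swap a b * w := by rw [swap_inv]
  rw [h2, sameCycle_iff_ell_lt hab]
  have h1 : absLength (T n) (swap a b) = 1 := ell_swap hab
  rw [h1]
  show ell w = 1 + ell (swap a b * w) ↔ _
  have := ell_mul_swap_dichotomy w hab
  omega

end Char

section Cyc

/-- cyclic gap from `a` to `j`: the unique `d ∈ [1, n]` with `a + d ≡ j (mod n)`. -/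
def g {n : ℕ} (a j : Fin n) : ℕ := (j.val + n - 1 - a.val) % n + 1

lemma g_pos (a j : Fin n) : 1 ≤ g a j := Nat.le_add_left 1 _

lemma g_le (a j : Fin n) : g a j ≤ n := by
  have h0 : 0 < n := a.pos
  have := Nat.mod_lt (j.val + n - 1 - a.val) h0
  show (j.val + n - 1 - a.val) % n + 1 ≤ n
  omega

lemma g_spec (a j : Fin n) : (a.val + g a j) % n = j.val := by
  have ha := a.isLt
  have hj := j.isLt
  unfold g
  have h1 : a.val + ((j.val + n - 1 - a.val) % n + 1) = (a.val + 1) + (j.val + n - 1 - a.val) % n := by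
    ring
  rw [h1, Nat.add_mod_mod]
  have h2 : (a.val + 1) + (j.val + n - 1 - a.val) = j.val + n := by omega
  rw [h2, Nat.add_mod_right, Nat.mod_eq_of_lt hj]

lemma g_unique {n : ℕ} {a j : Fin n} {m : ℕ} (h1 : 1 ≤ m) (h2 : m ≤ n)
    (h3 : (a.val + m) % n = j.val) : m = g a j := by
  have hs := g_spec a j
  have hgp := g_pos a j
  have hgl := g_le a j
  have h0 : 0 < n := a.pos
  have hmod : m % n = g a j % n := by
    have h4 : (a.val + m) % n = (a.val + g a j) % n := by rw [h3, hs]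
    have h5 : Nat.ModEq n (a.val + m) (a.val + g a j) := h4
    exact Nat.ModEq.add_left_cancel' a.val h5
  rcases Nat.lt_or_ge m n with h5 | h5
  · rw [Nat.mod_eq_of_lt h5] at hmod
    rcases Nat.lt_or_ge (g a j) n with h6 | h6
    · rw [Nat.mod_eq_of_lt h6] at hmod; exact hmod
    · have h7 : g a j = n := le_antisymm hgl h6
      rw [h7, Nat.mod_self] at hmod; omega
  · have hm : m = n := le_antisymm h2 h5
    rw [hm, Nat.mod_self] at hmod
    rcases Nat.lt_or_ge (g a j) n with h6 | h6
    · rw [Nat.mod_eq_of_lt h6] at hmod; omega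
    · have h7 : g a j = n := le_antisymm hgl h6; omega

lemma g_self (a : Fin n) : g a a = n := by
  have h0 : 0 < n := a.pos
  exact (g_unique (by omega) le_rfl (by rw [Nat.add_mod_right, Nat.mod_eq_of_lt a.isLt])).symm

lemma g_inj {n : ℕ} {a j j' : Fin n} (h : g a j = g a j') : j = j' := by
  have h1 := g_spec a j
  have h2 := g_spec a j'
  apply Fin.ext
  rw [← h1, ← h2, h]

lemma g_lt_of_ne {n : ℕ} {a j : Fin n} (h : j ≠ a) : g a j < n := by
  have h1 := g_le a j
  rcases h1.lt_or_eq with h2 | h2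
  · exact h2
  · exfalso; apply h; apply g_inj (a := a); rw [h2, g_self]

lemma g_add (a y z : Fin n) : g a y + g y z = g a z ∨ g a y + g y z = g a z + n := by
  have h0 : 0 < n := a.pos
  have h1 := g_pos a y
  have h2 := g_pos y z
  have h3 := g_le a y
  have h4 := g_le y z
  have hs1 : (a.val + (g a y + g y z)) % n = z.val := by
    have e : a.val + (g a y + g y z) = (a.val + g a y) + g y z := by ring
    rw [e, ← Nat.mod_add_mod, g_spec, g_spec]
  rcases le_or_gt (g a y + g y z) n with h | h
  · left; exact g_unique (by omega) h hs1
  · right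
    have hs2 : (a.val + (g a y + g y z - n)) % n = z.val := by
      have e : a.val + (g a y + g y z) = (a.val + (g a y + g y z - n)) + n := by omega
      rw [e, Nat.add_mod_right] at hs1
      exact hs1
    have := g_unique (m := g a y + g y z - n) (by omega) (by omega) hs2
    omega

/-- Each cycle of `w` proceeds in increasing cyclic order: `w i` is the cyclically
nearest element of the cycle of `i`. -/
def Inc {n : ℕ} (w : Perm (Fin n)) : Prop :=
  ∀ i j : Fin n, w.SameCycle i j → g i (w i) ≤ g i j

lemma inc_finRotate (hn : 2 ≤ n) : Inc (finRotate n) := by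
  obtain ⟨m, rfl⟩ : ∃ m, n = m + 2 := ⟨n - 2, by omega⟩
  intro i j _
  have h1 : g i (finRotate (m + 2) i) = 1 := by
    refine (g_unique le_rfl (by omega) ?_).symm
    rw [finRotate_succ_apply, Fin.add_def, Fin.val_one]
  rw [h1]; exact g_pos i j

lemma sameCycle_of_mul_swap {v : Perm (Fin n)} {a b i j : Fin n} (hs : v.SameCycle a b)
    (h : (v * swap a b).SameCycle i j) : v.SameCycle i j := by
  set w := v * swap a b with hw
  have step : ∀ k, v.SameCycle k (w k) := by
    intro k
    have happ : w k = v (swap a b k) := rfl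
    rcases eq_or_ne k a with rfl | hka
    · rw [happ, swap_apply_left]
      exact hs.trans ⟨1, by rw [zpow_one]⟩
    rcases eq_or_ne k b with rfl | hkb
    · rw [happ, swap_apply_right]
      exact hs.symm.trans ⟨1, by rw [zpow_one]⟩
    · rw [happ, swap_apply_of_ne_of_ne hka hkb]
      exact ⟨1, by rw [zpow_one]⟩
  obtain ⟨m, -, hm⟩ := h.exists_pow_eq'
  rw [← hm]
  clear hm
  induction m with
  | zero => exact ⟨0, by simp⟩
  | succ m ih =>
    rw [pow_succ', Perm.mul_apply]
    exact ih.trans (step _)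

lemma key_bound {v : Perm (Fin n)} (hv : Inc v) {a b : Fin n} (hab : a ≠ b)
    (hs : v.SameCycle a b) :
    ∀ j, (v * swap a b).SameCycle a j → g a (v b) ≤ g a j := by
  set w := v * swap a b with hw
  have hwa : w a = v b := by rw [hw, Perm.mul_apply, swap_apply_left]
  have hgba : g b a < n := g_lt_of_ne hab
  have inv : ∀ m : ℕ, g b ((w ^ m) a) ≤ g b a := by
    intro m; induction m with
    | zero => simp
    | succ m ih =>
      rw [pow_succ', Perm.mul_apply]
      set k := (w ^ m) a with hk
      rcases eq_or_ne k a with hka | hka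
      · rw [hka, hwa]
        exact hv b a hs.symm
      · have hkb : k ≠ b := by
          intro hc
          rw [hc, g_self] at ih
          omega
        have hwk : w k = v k := by rw [hw, Perm.mul_apply, swap_apply_of_ne_of_ne hka hkb]
        rw [hwk]
        have hKA : g b k < g b a := lt_of_le_of_ne ih (fun hEq => hka (g_inj hEq))
        have hscka : v.SameCycle k a := by
          have h1 : w.SameCycle a k := ⟨(m : ℤ), by rw [zpow_natCast, ← hk]⟩
          exact (sameCycle_of_mul_swap hs h1).symm
        have hka' := hv k a hscka
        have hgka : g b k + g k a = g b a := by
          rcases g_add b k a with h | h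
          · exact h
          · have := g_le k a
            have := g_pos b k
            omega
        rcases g_add b k (v k) with h | h
        · omega
        · have := g_pos b (v k)
          have := g_pos k (v k)
          omega
  intro j hj
  rcases eq_or_ne j a with hja | hja
  · rw [hja, g_self]; exact g_le a (v b)
  · obtain ⟨m, -, hm⟩ := hj.exists_pow_eq'
    have hD : g b j ≤ g b a := by rw [← hm]; exact inv m
    have hd1 : g b (v b) ≤ g b j := by
      apply hv b j
      exact hs.symm.trans (sameCycle_of_mul_swap hs hj)
    have hd0 : g b (v b) ≤ g b a := hv b a hs.symm
    have hbeta : g a b + g b a = n := by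
      rcases g_add a b a with h | h
      · rw [g_self] at h; exact h
      · rw [g_self] at h
        have := g_le a b
        omega
    have hgaj : g a j = g a b + g b j := by
      rcases g_add a b j with h | h
      · exact h.symm
      · have := g_pos a j
        omega
    have hgavb : g a (v b) = g a b + g b (v b) := by
      rcases g_add a b (v b) with h | h
      · exact h.symm
      · have := g_pos a (v b)
        omega
    omega

lemma inc_mul_swap {v : Perm (Fin n)} (hv : Inc v) {a b : Fin n} (hab : a ≠ b)
    (hs : v.SameCycle a b) : Inc (v * swap a b) := by
  intro i j hij
  rcases eq_or_ne i a with hia | hia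
  · rw [hia] at hij ⊢
    have h1 : (v * swap a b) a = v b := by rw [Perm.mul_apply, swap_apply_left]
    rw [h1]
    exact key_bound hv hab hs j hij
  rcases eq_or_ne i b with hib | hib
  · rw [hib] at hij ⊢
    have hcomm : v * swap a b = v * swap b a := by rw [swap_comm]
    have h1 : (v * swap a b) b = v a := by rw [Perm.mul_apply, swap_apply_right]
    rw [h1]
    rw [hcomm] at hij
    exact key_bound hv hab.symm hs.symm j hij
  · have h1 : (v * swap a b) i = v i := by rw [Perm.mul_apply, swap_apply_of_ne_of_ne hia hib]
    rw [h1]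
    exact hv i j (sameCycle_of_mul_swap hs hij)

lemma inc_eq {u w : Perm (Fin n)} (hu : Inc u) (hw : Inc w)
    (h : ∀ i j, u.SameCycle i j ↔ w.SameCycle i j) : u = w := by
  apply Equiv.ext
  intro i
  have h1 : g i (u i) ≤ g i (w i) := hu i (w i) ((h i (w i)).mpr ⟨1, by rw [zpow_one]⟩)
  have h2 : g i (w i) ≤ g i (u i) := hw i (u i) ((h i (u i)).mp ⟨1, by rw [zpow_one]⟩)
  exact g_inj (le_antisymm h1 h2)

lemma inc_of_absLe_c (hn : 2 ≤ n) {w : Perm (Fin n)} (h : absLe (T n) w (finRotate n)) :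
    Inc w := by
  suffices H : ∀ k (w : Perm (Fin n)), absLe (T n) w (finRotate n) →
      ell (w⁻¹ * finRotate n) = k → Inc w from H _ w h rfl
  intro k
  induction k with
  | zero =>
    intro w h hk
    have h1 : w⁻¹ * finRotate n = 1 := ell_eq_zero hk
    have h2 : w = finRotate n := by
      have := inv_mul_eq_one.mp h1
      exact this
    rw [h2]
    exact inc_finRotate hn
  | succ k ih =>
    intro w h hk
    obtain ⟨l, hl1, hl2, hl3⟩ := ell_spec (w⁻¹ * finRotate n)
    rcases l with _ | ⟨t, l'⟩
    · simp only [List.length_nil] at hl1; omega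
    obtain ⟨a, b, hab, rfl⟩ := hl2 t List.mem_cons_self
    have hprod : w⁻¹ * finRotate n = swap a b * l'.prod := by rw [← hl3, List.prod_cons]
    have hw'c : (w * swap a b)⁻¹ * finRotate n = l'.prod := by
      rw [mul_inv_rev, swap_inv, mul_assoc, hprod, ← mul_assoc, swap_mul_self, one_mul]
    have hlen : l'.length = k := by
      simp only [List.length_cons] at hl1
      omega
    have h1 : ell ((w * swap a b)⁻¹ * finRotate n) ≤ k := by
      rw [hw'c, ← hlen]
      exact ell_le (fun s hs => hl2 s (List.mem_cons_of_mem _ hs)) rfl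
    have h2 : ell (w * swap a b) ≤ ell w + 1 := by
      have := ell_mul_le w (swap a b)
      rwa [ell_swap hab] at this
    have h3 := ell_triangle (w * swap a b) (finRotate n)
    have h0 : ell (finRotate n) = ell w + ell (w⁻¹ * finRotate n) := h
    have h4 : ell (w * swap a b) = ell w + 1 ∧ ell ((w * swap a b)⁻¹ * finRotate n) = k := by
      constructor <;> omega
    have h5 : absLe (T n) (w * swap a b) (finRotate n) := by
      show ell (finRotate n) = ell (w * swap a b) + ell ((w * swap a b)⁻¹ * finRotate n)
      omega
    have hincw' : Inc (w * swap a b) := ih (w * swap a b) h5 h4.2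
    have hwid : (w * swap a b) * swap a b = w := by rw [mul_assoc, swap_mul_self, mul_one]
    have hsc : (w * swap a b).SameCycle a b := by
      apply (sameCycle_iff_ell_lt_right hab).mpr
      rw [hwid]
      omega
    have := inc_mul_swap hincw' hab hsc
    rwa [hwid] at this

end Cyc

section Moved

variable (K : Type*) [Field K]

/-- standard basis vector (indexed by value equality, to match `vecP`). -/
def E (i : Fin n) : Fin n → K := fun k => if (k : ℕ) = (i : ℕ) then 1 else 0

lemma E_apply_self (i : Fin n) : E K i i = 1 := by simp [E]

lemma E_apply_ne {i k : Fin n} (h : k ≠ i) : E K i k = 0 := by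
  unfold E
  rw [if_neg (fun hc => h (Fin.ext hc))]

lemma sum_E (i : Fin n) : ∑ k, E K i k = 1 := by
  rw [Finset.sum_eq_single i]
  · exact E_apply_self K i
  · intro b _ hb; exact E_apply_ne K hb
  · intro h; exact absurd (Finset.mem_univ i) h

/-- span of the roots over pairs in the same cycle, inside `K^n`. -/
def Sp (w : Perm (Fin n)) : Submodule K (Fin n → K) :=
  Submodule.span K {x | ∃ i j : Fin n, w.SameCycle i j ∧ x = E K i - E K j}

/-- the minimal representative of the cycle of `i`. -/
def rep (w : Perm (Fin n)) (i : Fin n) : Fin n :=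
  (Finset.univ.filter (w.SameCycle i)).min'
    ⟨i, Finset.mem_filter.mpr ⟨Finset.mem_univ i, ⟨0, by simp⟩⟩⟩

lemma rep_sameCycle (w : Perm (Fin n)) (i : Fin n) : w.SameCycle i (rep w i) :=
  (Finset.mem_filter.mp (Finset.min'_mem _ _)).2

lemma rep_eq_of_sameCycle {w : Perm (Fin n)} {i j : Fin n} (h : w.SameCycle i j) :
    rep w i = rep w j := by
  unfold rep
  congr 1
  ext k
  simp only [Finset.mem_filter, Finset.mem_univ, true_and]
  exact ⟨fun hk => h.symm.trans hk, fun hk => h.trans hk⟩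

lemma rep_idem (w : Perm (Fin n)) (i : Fin n) : rep w (rep w i) = rep w i :=
  (rep_eq_of_sameCycle (rep_sameCycle w i)).symm

/-- number of cycles (including fixed points). -/
def nu (w : Perm (Fin n)) : ℕ := (Finset.univ.filter (fun i => rep w i = i)).card

lemma dF_eq_nu (w : Perm (Fin n)) : finrank K (Fx K w) = nu w := by
  have e : Fx K w ≃ₗ[K] ({i : Fin n // rep w i = i} → K) :=
    { toFun := fun x r => x.val r.val
      map_add' := fun x y => rfl
      map_smul' := fun c x => rfl
      invFun := fun y =>
        ⟨fun i => y ⟨rep w i, rep_idem w i⟩, by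
          intro k
          have h1 : rep w (w k) = rep w k :=
            (rep_eq_of_sameCycle (⟨1, by rw [zpow_one]⟩ : w.SameCycle k (w k))).symm
          show y ⟨rep w (w k), _⟩ = y ⟨rep w k, _⟩
          exact congrArg y (Subtype.ext h1)⟩
      left_inv := by
        intro x
        apply Subtype.ext
        funext i
        have h1 : x.val (rep w i) = x.val i :=
          (Fx_sameCycle K x.prop (rep_sameCycle w i)).symm
        simpa using h1
      right_inv := by
        intro y
        funext r
        show y ⟨rep w r.val, _⟩ = y r
        exact congrArg y (Subtype.ext r.prop) }
  rw [e.finrank_eq, Module.finrank_pi, Fintype.card_subtype]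
  rfl

lemma nu_add_ell (w : Perm (Fin n)) : nu w + ell w = n := by
  have := dF_add_ell (ZMod 2) w
  rwa [dF_eq_nu (ZMod 2) w] at this

/-- the independent family spanning `Sp K w`. -/
def fam (w : Perm (Fin n)) (r : {i : Fin n // rep w i ≠ i}) : Fin n → K :=
  E K r.val - E K (rep w r.val)

lemma fam_li (w : Perm (Fin n)) : LinearIndependent K (fam K w) := by
  rw [Fintype.linearIndependent_iff]
  intro c hc r0
  have h1 := congrFun hc r0.val
  rw [Finset.sum_apply] at h1
  have h2 : ∀ r : {i : Fin n // rep w i ≠ i}, (c r • fam K w r) r0.val =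
      if r = r0 then c r0 else 0 := by
    intro r
    rcases eq_or_ne r r0 with hr | hr
    · rw [if_pos hr, hr]
      simp only [Pi.smul_apply, fam, Pi.sub_apply, smul_eq_mul]
      rw [E_apply_self, E_apply_ne K (fun hc0 : r0.val = rep w r0.val => by
        have := rep_idem w r0.val
        exact r0.prop (by rw [hc0, this, ← hc0]))]
      ring
    · rw [if_neg hr]
      simp only [Pi.smul_apply, fam, Pi.sub_apply, smul_eq_mul]
      have ha : r0.val ≠ r.val := fun hc0 => hr (Subtype.ext hc0).symm
      rw [E_apply_ne K ha, E_apply_ne K (fun hc0 : r0.val = rep w r.val => by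
        have h3 : rep w r0.val = r0.val := by
          rw [hc0, rep_idem w r.val, ← hc0]
        exact r0.prop h3)]
      ring
  rw [Finset.sum_congr rfl (fun r _ => h2 r), Finset.sum_ite_eq' _ r0] at h1
  simp only [Finset.mem_univ, if_pos] at h1
  simpa using h1

lemma span_fam (w : Perm (Fin n)) : Submodule.span K (Set.range (fam K w)) = Sp K w := by
  apply le_antisymm
  · rw [Submodule.span_le]
    rintro x ⟨r, rfl⟩
    exact Submodule.subset_span ⟨r.val, rep w r.val, rep_sameCycle w r.val, rfl⟩
  · rw [Sp, Submodule.span_le]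
    rintro x ⟨i, j, hij, rfl⟩
    have hmem : ∀ i : Fin n, E K i - E K (rep w i) ∈ Submodule.span K (Set.range (fam K w)) := by
      intro i
      rcases eq_or_ne (rep w i) i with h | h
      · rw [h]; simp
      · exact Submodule.subset_span ⟨⟨i, h⟩, rfl⟩
    have hr : rep w i = rep w j := rep_eq_of_sameCycle hij
    have hsum : E K i - E K j =
        (E K i - E K (rep w i)) - (E K j - E K (rep w j)) := by
      rw [hr]; abel
    rw [hsum]
    exact Submodule.sub_mem _ (hmem i) (hmem j)

lemma finrank_Sp (w : Perm (Fin n)) : finrank K (Sp K w) = n - nu w := by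
  rw [← span_fam, finrank_span_eq_card (fam_li K w)]
  have h1 : Fintype.card {i : Fin n // rep w i ≠ i} =
      Fintype.card (Fin n) - Fintype.card {i : Fin n // rep w i = i} :=
    Fintype.card_subtype_compl _
  have h2 : Fintype.card {i : Fin n // rep w i = i} = nu w := by
    rw [Fintype.card_subtype]; rfl
  rw [h1, h2, Fintype.card_fin]

/-- the cycle-counting functional. -/
lemma Sp_le_ker (w : Perm (Fin n)) (i : Fin n) :
    Sp K w ≤ LinearMap.ker (∑ k ∈ Finset.univ.filter (w.SameCycle i),
      (LinearMap.proj k : (Fin n → K) →ₗ[K] K)) := by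
  rw [Sp, Submodule.span_le]
  rintro x ⟨a, b, hab, rfl⟩
  simp only [SetLike.mem_coe, LinearMap.mem_ker, LinearMap.sum_apply, LinearMap.proj_apply]
  have hfil : ∀ u : Fin n, (∑ k ∈ Finset.univ.filter (w.SameCycle i), E K u k) =
      if w.SameCycle i u then 1 else 0 := by
    intro u
    rcases Classical.em (w.SameCycle i u) with h | h
    · rw [if_pos h, Finset.sum_eq_single u]
      · exact E_apply_self K u
      · intro b _ hb; exact E_apply_ne K hb
      · intro hna; exact absurd (Finset.mem_filter.mpr ⟨Finset.mem_univ u, h⟩) hna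
    · rw [if_neg h]
      apply Finset.sum_eq_zero
      intro k hk
      apply E_apply_ne K
      intro hc
      exact h (by rw [← hc]; exact (Finset.mem_filter.mp hk).2)
  have : ∑ k ∈ Finset.univ.filter (w.SameCycle i), (E K a - E K b) k =
      (∑ k ∈ Finset.univ.filter (w.SameCycle i), E K a k) -
      (∑ k ∈ Finset.univ.filter (w.SameCycle i), E K b k) := by
    rw [← Finset.sum_sub_distrib]; rfl
  rw [this, hfil a, hfil b]
  have hiff : w.SameCycle i a ↔ w.SameCycle i b := ⟨fun h => h.trans hab, fun h => h.trans hab.symm⟩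
  rcases Classical.em (w.SameCycle i a) with h | h
  · rw [if_pos h, if_pos (hiff.mp h)]; ring
  · rw [if_neg h, if_neg (fun hc => h (hiff.mpr hc))]; ring

lemma mem_Sp_iff {w : Perm (Fin n)} {i j : Fin n} :
    E K i - E K j ∈ Sp K w ↔ w.SameCycle i j := by
  constructor
  · intro hmem
    by_contra hnc
    have hij : i ≠ j := fun hc => hnc (hc ▸ ⟨0, by simp⟩)
    have h1 := Sp_le_ker K w i hmem
    simp only [LinearMap.mem_ker, LinearMap.sum_apply, LinearMap.proj_apply] at h1
    have h2 : ∑ k ∈ Finset.univ.filter (w.SameCycle i), (E K i - E K j) k = 1 := by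
      have e1 : ∑ k ∈ Finset.univ.filter (w.SameCycle i), E K i k = 1 := by
        rw [Finset.sum_eq_single i]
        · exact E_apply_self K i
        · intro b _ hb; exact E_apply_ne K hb
        · intro hna; exact absurd (Finset.mem_filter.mpr ⟨Finset.mem_univ i, ⟨0, by simp⟩⟩) hna
      have e2 : ∑ k ∈ Finset.univ.filter (w.SameCycle i), E K j k = 0 := by
        apply Finset.sum_eq_zero
        intro k hk
        apply E_apply_ne K
        intro hc
        exact hnc (by rw [← hc]; exact (Finset.mem_filter.mp hk).2)
      rw [show ∀ S : Finset (Fin n), ∑ k ∈ S, (E K i - E K j) k =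
          (∑ k ∈ S, E K i k) - (∑ k ∈ S, E K j k) from fun S => by
          rw [← Finset.sum_sub_distrib]; rfl, e1, e2]
      ring
    rw [h1] at h2
    exact zero_ne_one h2
  · intro h
    exact Submodule.subset_span ⟨i, j, h, rfl⟩

end Moved

section Final

variable (p : ℕ) [Fact p.Prime]

/-- restriction to the first `n-1` coordinates. -/
def pr (n : ℕ) : (Fin n → ZMod p) →ₗ[ZMod p] (Fin (n - 1) → ZMod p) :=
  LinearMap.funLeft (ZMod p) (ZMod p) (Fin.castLE (Nat.sub_le n 1))

lemma pr_E (i : Fin n) : pr p n (E (ZMod p) i) = vecP p n i := rfl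

lemma pr_inj {x : Fin n → ZMod p} (hx : ∑ k, x k = 0) (hp : pr p n x = 0) : x = 0 := by
  have hz : ∀ j : Fin n, (j : ℕ) < n - 1 → x j = 0 := by
    intro j hj
    have h1 := congrFun hp ⟨j.val, hj⟩
    have h2 : Fin.castLE (Nat.sub_le n 1) ⟨j.val, hj⟩ = j := Fin.ext rfl
    rw [show pr p n x ⟨j.val, hj⟩ = x (Fin.castLE (Nat.sub_le n 1) ⟨j.val, hj⟩) from rfl, h2] at h1
    exact h1
  funext k
  by_cases hk : (k : ℕ) < n - 1
  · exact hz k hk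
  · have hsum : ∑ j, x j = x k := by
      rw [Finset.sum_eq_single k]
      · intro b _ hb
        apply hz
        have hb' : (b : ℕ) ≠ (k : ℕ) := fun hc => hb (Fin.ext hc)
        have := b.isLt
        have := k.isLt
        omega
      · intro hna; exact absurd (Finset.mem_univ k) hna
    rw [hsum] at hx
    exact hx

lemma sum_E_sub (K : Type*) [Field K] (i j : Fin n) : ∑ k, (E K i - E K j) k = 0 := by
  have : ∀ k, (E K i - E K j) k = E K i k - E K j k := fun k => rfl
  rw [Finset.sum_congr rfl (fun k _ => this k), Finset.sum_sub_distrib, sum_E, sum_E, sub_self]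

lemma Sp_sum_zero {w : Perm (Fin n)} {x : Fin n → ZMod p} (hx : x ∈ Sp (ZMod p) w) :
    ∑ k, x k = 0 := by
  have hker : Sp (ZMod p) w ≤ LinearMap.ker (∑ k : Fin n,
      (LinearMap.proj k : (Fin n → ZMod p) →ₗ[ZMod p] ZMod p)) := by
    rw [Sp, Submodule.span_le]
    rintro y ⟨a, b, hab, rfl⟩
    simp only [SetLike.mem_coe, LinearMap.mem_ker, LinearMap.sum_apply, LinearMap.proj_apply]
    exact sum_E_sub (ZMod p) a b
  have := hker hx
  simpa only [LinearMap.mem_ker, LinearMap.sum_apply, LinearMap.proj_apply] using this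

lemma pMoved_eq {w : Perm (Fin n)} :
    pMovedSpace p n w = Submodule.map (pr p n) (Sp (ZMod p) w) := by
  apply le_antisymm
  · rw [pMovedSpace, Submodule.span_le]
    rintro x ⟨i, j, hlt, habs, rfl⟩
    have hsc : w.SameCycle i j := (absLe_swap_iff (ne_of_lt hlt)).mp habs
    have he : vecP p n i - vecP p n j = pr p n (E (ZMod p) i - E (ZMod p) j) := by
      rw [map_sub, pr_E, pr_E]
    rw [he]
    exact Submodule.mem_map_of_mem (Submodule.subset_span ⟨i, j, hsc, rfl⟩)
  · rw [Sp, Submodule.map_span, Submodule.span_le]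
    rintro x ⟨y, ⟨i, j, hsc, rfl⟩, rfl⟩
    show pr p n (E (ZMod p) i - E (ZMod p) j) ∈ pMovedSpace p n w
    rcases lt_trichotomy i j with h | h | h
    · rw [map_sub, pr_E, pr_E]
      exact Submodule.subset_span ⟨i, j, h, (absLe_swap_iff (ne_of_lt h)).mpr hsc, rfl⟩
    · rw [h]
      simp only [sub_self, map_zero]
      exact Submodule.zero_mem _
    · rw [map_sub, pr_E, pr_E, show vecP p n i - vecP p n j = -(vecP p n j - vecP p n i) from
        (neg_sub _ _).symm]
      exact Submodule.neg_mem _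
        (Submodule.subset_span ⟨j, i, h, (absLe_swap_iff (ne_of_lt h)).mpr hsc.symm, rfl⟩)

lemma finrank_pMoved (w : Perm (Fin n)) :
    finrank (ZMod p) (pMovedSpace p n w) = ell w := by
  set f := (pr p n).comp (Sp (ZMod p) w).subtype with hf
  have hker : LinearMap.ker f = ⊥ := by
    rw [LinearMap.ker_eq_bot']
    intro m hm
    apply Subtype.ext
    exact pr_inj p (Sp_sum_zero p m.prop) hm
  have hrange : LinearMap.range f = pMovedSpace p n w := by
    rw [hf, LinearMap.range_comp, Submodule.range_subtype, ← pMoved_eq]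
  have hrn := LinearMap.finrank_range_add_finrank_ker f
  rw [hker, finrank_bot, add_zero, hrange, finrank_Sp] at hrn
  have h1 := nu_add_ell w
  omega

lemma vec_mem_of_sameCycle {w : Perm (Fin n)} {i j : Fin n} (hsc : w.SameCycle i j) :
    vecP p n i - vecP p n j ∈ pMovedSpace p n w := by
  rw [pMoved_eq, show vecP p n i - vecP p n j = pr p n (E (ZMod p) i - E (ZMod p) j) from
    by rw [map_sub, pr_E, pr_E]]
  exact Submodule.mem_map_of_mem (Submodule.subset_span ⟨i, j, hsc, rfl⟩)

lemma sameCycle_of_vec_mem {w : Perm (Fin n)} {i j : Fin n}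
    (h : vecP p n i - vecP p n j ∈ pMovedSpace p n w) : w.SameCycle i j := by
  rw [pMoved_eq] at h
  obtain ⟨y, hy, hπ⟩ := h
  have h1 : pr p n (y - (E (ZMod p) i - E (ZMod p) j)) = 0 := by
    rw [map_sub, hπ, map_sub, pr_E, pr_E, sub_self]
  have h2 : ∑ k, (y - (E (ZMod p) i - E (ZMod p) j)) k = 0 := by
    have e : ∀ k, (y - (E (ZMod p) i - E (ZMod p) j)) k =
        y k - (E (ZMod p) i - E (ZMod p) j) k := fun k => rfl
    rw [Finset.sum_congr rfl (fun k _ => e k), Finset.sum_sub_distrib, Sp_sum_zero p hy,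
      sum_E_sub, sub_self]
  have h3 := pr_inj p h2 h1
  have h4 : y = E (ZMod p) i - E (ZMod p) j := by
    have := sub_eq_zero.mp h3
    exact this
  rw [h4] at hy
  exact (mem_Sp_iff (ZMod p)).mp hy

end Final

end NCA

/-- For `n ≥ 2` and any prime `p`, the map `w ↦ M_p(w)` is a rank-preserving poset
embedding of `NC(Sₙ)` (the interval below the Coxeter element `(1 2 … n)` in the
absolute order) into the subspace lattice of `𝔽ₚⁿ⁻¹`: it is order-preserving,
injective, and `dim M_p(w) = ℓ(w)`. -/
theorem ncA_pMoved_embedding (n p : ℕ) (hn : 2 ≤ n) (hp : p.Prime) :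
    (∀ u w : Equiv.Perm (Fin n),
        absLe {t : Equiv.Perm (Fin n) | t.IsSwap} u (finRotate n) →
        absLe {t : Equiv.Perm (Fin n) | t.IsSwap} w (finRotate n) →
        absLe {t : Equiv.Perm (Fin n) | t.IsSwap} u w →
        pMovedSpace p n u ≤ pMovedSpace p n w) ∧
      Set.InjOn (pMovedSpace p n)
        {w : Equiv.Perm (Fin n) |
          absLe {t : Equiv.Perm (Fin n) | t.IsSwap} w (finRotate n)} ∧
      ∀ w : Equiv.Perm (Fin n),
        absLe {t : Equiv.Perm (Fin n) | t.IsSwap} w (finRotate n) →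
        Module.finrank (ZMod p) (pMovedSpace p n w) =
          absLength {t : Equiv.Perm (Fin n) | t.IsSwap} w := by
  haveI := Fact.mk hp
  refine ⟨?_, ?_, ?_⟩
  · intro u w _ _ huw
    apply Submodule.span_mono
    rintro x ⟨i, j, hlt, habs, rfl⟩
    exact ⟨i, j, hlt, NCA.absLe_trans habs huw, rfl⟩
  · intro u hu w hw h
    have hiu := NCA.inc_of_absLe_c hn hu
    have hiw := NCA.inc_of_absLe_c hn hw
    apply NCA.inc_eq hiu hiw
    intro i j
    constructor
    · intro hsc
      exact NCA.sameCycle_of_vec_mem p (h ▸ NCA.vec_mem_of_sameCycle p hsc)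
    · intro hsc
      exact NCA.sameCycle_of_vec_mem p (h ▸ NCA.vec_mem_of_sameCycle p hsc)
  · intro w _
    exact NCA.finrank_pMoved p w
end

section
/- Let n ≥ 1 and let Φ⁺ := {e_i − e_j : 1 ≤ i < j ≤ n} ∪ {e_i + e_j : 1 ≤ i < j ≤ n} ∪ {e_i : 1 ≤ i ≤ n} ⊆ ℤ^n, where e_1, …, e_n is the standard basis of ℤ^n. Then every prime p ≠ 2 is compatible with Φ⁺: every subset B ⊆ Φ⁺ that is a ℚ-basis of ℚ^n reduces coordinatewise modulo p to an 𝔽_p-basis of 𝔽_p^n. -/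
/-- Coordinatewise reduction modulo `p` of an integer vector. -/
def modRed (n p : ℕ) (v : Fin n → ℤ) : Fin n → ZMod p := fun k => (v k : ZMod p)

/-- The rational vector corresponding to an integer vector. -/
def ratVec (n : ℕ) (v : Fin n → ℤ) : Fin n → ℚ := fun k => (v k : ℚ)

/-- A prime `p` is compatible with a set `Φ ⊆ ℤⁿ` if every subset of `Φ` that is a
`ℚ`-basis of `ℚⁿ` reduces modulo `p` to an `𝔽ₚ`-basis of `𝔽ₚⁿ`. -/
def CompatiblePrime (n p : ℕ) (Φ : Set (Fin n → ℤ)) : Prop :=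
  ∀ B : Set (Fin n → ℤ), B ⊆ Φ →
    (LinearIndependent ℚ (fun v : B => ratVec n v.1) ∧
        Submodule.span ℚ (Set.range fun v : B => ratVec n v.1) = ⊤) →
      LinearIndependent (ZMod p) (fun v : B => modRed n p v.1) ∧
        Submodule.span (ZMod p) (Set.range fun v : B => modRed n p v.1) = ⊤

/-- The standard basis vector `e_i` of `ℤⁿ`. -/
def stdZ (n : ℕ) (i : Fin n) : Fin n → ℤ := fun k => if k = i then 1 else 0

/-- The set of positive roots of type `B`:
`Φ⁺ = {e_i − e_j : i < j} ∪ {e_i + e_j : i < j} ∪ {e_i}`. -/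
def PhiB (n : ℕ) : Set (Fin n → ℤ) :=
  {x | ∃ i j : Fin n, i < j ∧ x = stdZ n i - stdZ n j} ∪
    {x | ∃ i j : Fin n, i < j ∧ x = stdZ n i + stdZ n j} ∪
    {x | ∃ i : Fin n, x = stdZ n i}

/- ======================= Auxiliary lemmas ======================= -/

lemma phiB_shape {n : ℕ} {b : Fin n → ℤ} (hb : b ∈ PhiB n) :
    (∃ i j : Fin n, i ≠ j ∧ b = stdZ n i - stdZ n j) ∨
    (∃ i j : Fin n, i ≠ j ∧ b = stdZ n i + stdZ n j) ∨
    (∃ i : Fin n, b = stdZ n i) := by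
  simp only [PhiB, Set.mem_union, Set.mem_setOf_eq] at hb
  rcases hb with (⟨i, j, hij, rfl⟩ | ⟨i, j, hij, rfl⟩) | ⟨i, rfl⟩
  · exact Or.inl ⟨i, j, hij.ne, rfl⟩
  · exact Or.inr (Or.inl ⟨i, j, hij.ne, rfl⟩)
  · exact Or.inr (Or.inr ⟨i, rfl⟩)

lemma support_sub {n : ℕ} {a c k : Fin n} (hk : (stdZ n a - stdZ n c) k ≠ 0) :
    k = a ∨ k = c := by
  by_contra h
  push_neg at h
  simp [stdZ, h.1, h.2] at hk

lemma support_add {n : ℕ} {a c k : Fin n} (hk : (stdZ n a + stdZ n c) k ≠ 0) :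
    k = a ∨ k = c := by
  by_contra h
  push_neg at h
  simp [stdZ, h.1, h.2] at hk

lemma support_single {n : ℕ} {a k : Fin n} (hk : stdZ n a k ≠ 0) : k = a := by
  by_contra h
  simp [stdZ, h] at hk

lemma sub_apply_ne_left {n : ℕ} {a c : Fin n} (hac : a ≠ c) : (stdZ n a - stdZ n c) a ≠ 0 := by
  simp [stdZ, hac]

lemma sub_apply_ne_right {n : ℕ} {a c : Fin n} (hac : a ≠ c) : (stdZ n a - stdZ n c) c ≠ 0 := by
  simp [stdZ, hac.symm]

lemma add_apply_ne_left {n : ℕ} {a c : Fin n} (hac : a ≠ c) : (stdZ n a + stdZ n c) a ≠ 0 := by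
  simp [stdZ, hac]

lemma add_apply_ne_right {n : ℕ} {a c : Fin n} (hac : a ≠ c) : (stdZ n a + stdZ n c) c ≠ 0 := by
  simp [stdZ, hac.symm]

lemma modRed_stdZ (n p : ℕ) (i : Fin n) :
    modRed n p (stdZ n i) = fun j => if i = j then 1 else 0 := by
  funext j
  by_cases h : j = i
  · subst h; simp [modRed, stdZ]
  · simp [modRed, stdZ, h, Ne.symm h]

lemma modRed_sub (n p : ℕ) (a c : Fin n → ℤ) :
    modRed n p (a - c) = modRed n p a - modRed n p c := by
  funext k; simp [modRed]

lemma modRed_add (n p : ℕ) (a c : Fin n → ℤ) :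
    modRed n p (a + c) = modRed n p a + modRed n p c := by
  funext k; simp [modRed]

lemma ratVec_sub_val {n : ℕ} (a c : Fin n) (i : Fin n) :
    ratVec n (stdZ n a - stdZ n c) i
      = (if i = a then (1 : ℚ) else 0) - (if i = c then (1 : ℚ) else 0) := by
  simp [ratVec, stdZ, apply_ite (Int.cast : ℤ → ℚ)]

lemma ratVec_add_val {n : ℕ} (a c : Fin n) (i : Fin n) :
    ratVec n (stdZ n a + stdZ n c) i
      = (if i = a then (1 : ℚ) else 0) + (if i = c then (1 : ℚ) else 0) := by
  simp [ratVec, stdZ, apply_ite (Int.cast : ℤ → ℚ)]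

lemma ratVec_single_val {n : ℕ} (a : Fin n) (i : Fin n) :
    ratVec n (stdZ n a) i = (if i = a then (1 : ℚ) else 0) := by
  simp [ratVec, stdZ, apply_ite (Int.cast : ℤ → ℚ)]

/-- The main spanning lemma: if `B ⊆ Φ_B` spans `ℚⁿ`, then its reduction mod an odd prime
spans `𝔽ₚⁿ`. -/
lemma span_modRed_top (n p : ℕ) (hp : p.Prime) (hp2 : p ≠ 2) (B : Set (Fin n → ℤ))
    (hB : B ⊆ PhiB n)
    (hspan : Submodule.span ℚ (Set.range fun v : B => ratVec n v.1) = ⊤) :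
    Submodule.span (ZMod p) (Set.range fun v : B => modRed n p v.1) = ⊤ := by
  classical
  haveI : Fact p.Prime := ⟨hp⟩
  by_contra hne
  obtain ⟨f, hf0, hfbot⟩ := Submodule.exists_dual_map_eq_bot_of_lt_top
    (lt_top_iff_ne_top.mpr hne) inferInstance
  have hker : ∀ b ∈ B, f (modRed n p b) = 0 := by
    intro b hb
    have hmem : modRed n p b ∈ Submodule.span (ZMod p)
        (Set.range fun v : B => modRed n p v.1) :=
      Submodule.subset_span ⟨⟨b, hb⟩, rfl⟩
    have h2 : f (modRed n p b) ∈ Submodule.map f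
        (Submodule.span (ZMod p) (Set.range fun v : B => modRed n p v.1)) :=
      Submodule.mem_map_of_mem hmem
    rw [hfbot] at h2
    exact (Submodule.mem_bot (ZMod p)).mp h2
  set g : Fin n → ZMod p := fun k => f (modRed n p (stdZ n k)) with hg
  -- (2 : ZMod p) ≠ 0
  have h2ne : (2 : ZMod p) ≠ 0 := by
    intro h
    have hdvd : (p : ℕ) ∣ 2 := by
      have : ((2 : ℕ) : ZMod p) = 0 := by exact_mod_cast h
      rwa [ZMod.natCast_eq_zero_iff] at this
    rcases (Nat.prime_dvd_prime_iff_eq hp Nat.prime_two).mp hdvd with h'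
    exact hp2 h'
  -- relations satisfied by g
  have hrel_sub : ∀ a c : Fin n, stdZ n a - stdZ n c ∈ B → g a = g c := by
    intro a c hmem
    have := hker _ hmem
    rw [modRed_sub, map_sub] at this
    exact sub_eq_zero.mp this
  have hrel_add : ∀ a c : Fin n, stdZ n a + stdZ n c ∈ B → g a = -g c := by
    intro a c hmem
    have := hker _ hmem
    rw [modRed_add, map_add] at this
    exact eq_neg_of_add_eq_zero_left this
  have hrel_single : ∀ a : Fin n, stdZ n a ∈ B → g a = 0 := by
    intro a hmem
    exact hker _ hmem
  -- there is an index where g is nonzero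
  obtain ⟨i0, hi0⟩ : ∃ i0, g i0 ≠ 0 := by
    by_contra h
    push_neg at h
    apply hf0
    refine LinearMap.ext fun y => ?_
    rw [LinearMap.pi_apply_eq_sum_univ f y]
    have : ∀ i : Fin n, f (fun j => if i = j then 1 else 0) = 0 := by
      intro i
      rw [← modRed_stdZ n p i]
      exact h i
    simp [this]
  have hneg_ne : g i0 ≠ -g i0 := by
    intro h
    have : (2 : ZMod p) * g i0 = 0 := by
      rw [two_mul]
      nth_rewrite 1 [h]
      ring
    rcases mul_eq_zero.mp this with h' | h'
    · exact h2ne h'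
    · exact hi0 h'
  -- the support graph
  set r : Fin n → Fin n → Prop := fun i j => ∃ b ∈ B, b i ≠ 0 ∧ b j ≠ 0 with hr
  -- propagation of values along the component of i0
  have hC : ∀ i, Relation.ReflTransGen r i0 i → (g i = g i0 ∨ g i = -g i0) := by
    intro i h
    induction h with
    | refl => exact Or.inl rfl
    | @tail j k _ hstep ih =>
      obtain ⟨v, hvB, hvj, hvk⟩ := hstep
      have hrel : g k = g j ∨ g k = -g j := by
        rcases phiB_shape (hB hvB) with ⟨a, c, hac, rfl⟩ | ⟨a, c, hac, rfl⟩ | ⟨a, rfl⟩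
        · have hgac : g a = g c := hrel_sub a c hvB
          rcases support_sub hvj with rfl | rfl <;> rcases support_sub hvk with rfl | rfl <;>
            simp [hgac]
        · have hgac : g a = -g c := hrel_add a c hvB
          rcases support_add hvj with rfl | rfl <;> rcases support_add hvk with rfl | rfl <;>
            simp [hgac]
        · have := support_single hvj
          have := support_single hvk
          subst this
          rcases support_single hvj with rfl
          exact Or.inl rfl
      rcases hrel with h1 | h1 <;> rcases ih with h2 | h2 <;>
        simp [h1, h2]
  have hCne : ∀ i, Relation.ReflTransGen r i0 i → g i ≠ 0 := by
    intro i h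
    rcases hC i h with h' | h' <;> rw [h']
    · exact hi0
    · simpa using hi0
  -- the rational witness vector
  set x : Fin n → ℚ :=
    fun i => if Relation.ReflTransGen r i0 i then (if g i = g i0 then 1 else -1) else 0 with hx
  have hx_mem_pos : ∀ i, Relation.ReflTransGen r i0 i → g i = g i0 → x i = 1 := by
    intro i h hgi; simp [hx, h, hgi]
  have hx_mem_neg : ∀ i, Relation.ReflTransGen r i0 i → g i = -g i0 → x i = -1 := by
    intro i h hgi
    have : g i ≠ g i0 := by rw [hgi]; exact fun hh => hneg_ne hh.symm
    simp [hx, h, this]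
  have hx_nmem : ∀ i, ¬Relation.ReflTransGen r i0 i → x i = 0 := by
    intro i h; simp [hx, h]
  -- orthogonality of x to every element of B
  have horth : ∀ b ∈ B, ∑ i, x i * ratVec n b i = 0 := by
    intro b hb
    rcases phiB_shape (hB hb) with ⟨a, c, hac, rfl⟩ | ⟨a, c, hac, rfl⟩ | ⟨a, rfl⟩
    · -- b = e_a - e_c
      have hsum : ∑ i, x i * ratVec n (stdZ n a - stdZ n c) i = x a - x c := by
        simp_rw [ratVec_sub_val, mul_sub, Finset.sum_sub_distrib, mul_ite, mul_one, mul_zero,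
          Finset.sum_ite_eq', Finset.mem_univ, if_pos]
      rw [hsum]
      by_cases ha : Relation.ReflTransGen r i0 a
      · have hcC : Relation.ReflTransGen r i0 c :=
          ha.tail ⟨_, hb, sub_apply_ne_left hac, sub_apply_ne_right hac⟩
        have hgac : g a = g c := hrel_sub a c hb
        rcases hC a ha with h' | h'
        · rw [hx_mem_pos a ha h', hx_mem_pos c hcC (hgac ▸ h'), sub_self]
        · rw [hx_mem_neg a ha h', hx_mem_neg c hcC (hgac ▸ h'), sub_self]
      · have hcC : ¬Relation.ReflTransGen r i0 c := by
          intro h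
          exact ha (h.tail ⟨_, hb, sub_apply_ne_right hac, sub_apply_ne_left hac⟩)
        rw [hx_nmem a ha, hx_nmem c hcC, sub_self]
    · -- b = e_a + e_c
      have hsum : ∑ i, x i * ratVec n (stdZ n a + stdZ n c) i = x a + x c := by
        simp_rw [ratVec_add_val, mul_add, Finset.sum_add_distrib, mul_ite, mul_one, mul_zero,
          Finset.sum_ite_eq', Finset.mem_univ, if_pos]
      rw [hsum]
      by_cases ha : Relation.ReflTransGen r i0 a
      · have hcC : Relation.ReflTransGen r i0 c :=
          ha.tail ⟨_, hb, add_apply_ne_left hac, add_apply_ne_right hac⟩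
        have hgac : g a = -g c := hrel_add a c hb
        have hgca : g c = -g a := by rw [hgac, neg_neg]
        rcases hC a ha with h' | h'
        · have : g c = -g i0 := by rw [hgca, h']
          rw [hx_mem_pos a ha h', hx_mem_neg c hcC this, add_neg_cancel]
        · have : g c = g i0 := by rw [hgca, h', neg_neg]
          rw [hx_mem_neg a ha h', hx_mem_pos c hcC this, neg_add_cancel]
      · have hcC : ¬Relation.ReflTransGen r i0 c := by
          intro h
          exact ha (h.tail ⟨_, hb, add_apply_ne_right hac, add_apply_ne_left hac⟩)
        rw [hx_nmem a ha, hx_nmem c hcC, add_zero]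
    · -- b = e_a
      have hsum : ∑ i, x i * ratVec n (stdZ n a) i = x a := by
        simp_rw [ratVec_single_val, mul_ite, mul_one, mul_zero,
          Finset.sum_ite_eq', Finset.mem_univ, if_pos]
      rw [hsum]
      have haC : ¬Relation.ReflTransGen r i0 a := by
        intro h
        exact hCne a h (hrel_single a hb)
      exact hx_nmem a haC
  -- x is orthogonal to everything in the span, hence to the whole space
  have hall : ∀ y : Fin n → ℚ, ∑ i, x i * y i = 0 := by
    intro y
    have hy : y ∈ Submodule.span ℚ (Set.range fun v : B => ratVec n v.1) := by
      rw [hspan]; trivial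
    refine Submodule.span_induction (p := fun y _ => ∑ i, x i * y i = 0) ?_ ?_ ?_ ?_ hy
    · rintro z ⟨⟨b, hbB⟩, rfl⟩
      exact horth b hbB
    · simp
    · intro y₁ y₂ _ _ h1 h2
      simp only [Pi.add_apply, mul_add, Finset.sum_add_distrib, h1, h2, add_zero]
    · intro q y₁ _ h1
      simp only [Pi.smul_apply, smul_eq_mul, mul_left_comm, ← Finset.mul_sum, h1, mul_zero]
  -- contradiction at the basis vector i0
  have h1 : ∑ i, x i * (fun i => if i = i0 then (1 : ℚ) else 0) i = x i0 := by
    simp_rw [mul_ite, mul_one, mul_zero, Finset.sum_ite_eq', Finset.mem_univ, if_pos]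
  have h2 : x i0 = 1 := hx_mem_pos i0 Relation.ReflTransGen.refl rfl
  have := hall (fun i => if i = i0 then (1 : ℚ) else 0)
  rw [h1, h2] at this
  exact one_ne_zero this

/-- Every odd prime is compatible with the root set of type `B`. -/
theorem every_odd_prime_compatible_typeB (n : ℕ) (hn : 1 ≤ n) (p : ℕ)
    (hp : p.Prime) (hp2 : p ≠ 2) :
    CompatiblePrime n p (PhiB n) := by
  haveI : Fact p.Prime := ⟨hp⟩
  intro B hB hbasis
  obtain ⟨hind, hspan⟩ := hbasis
  classical
  -- B is finite with exactly n elements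
  haveI : Finite B := hind.finite
  haveI : Fintype B := Fintype.ofFinite B
  have hcard : Fintype.card B = n := by
    have h1 : Fintype.card B ≤ n := by
      have := hind.fintype_card_le_finrank
      simpa [Module.finrank_fintype_fun_eq_card] using this
    have h2 : n ≤ Fintype.card B := by
      have hle := finrank_range_le_card (R := ℚ) (fun v : B => ratVec n v.1)
      rw [Set.finrank, hspan, finrank_top] at hle
      simpa [Module.finrank_fintype_fun_eq_card] using hle
    omega
  have hspanp : Submodule.span (ZMod p) (Set.range fun v : B => modRed n p v.1) = ⊤ :=
    span_modRed_top n p hp hp2 B hB hspan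
  refine ⟨?_, hspanp⟩
  apply linearIndependent_of_top_le_span_of_card_eq_finrank
  · rw [hspanp]
  · rw [hcard, Module.finrank_fintype_fun_eq_card, Fintype.card_fin]
end

section
/- Let n ≥ 2. Define a bilinear form b_A on ℚ^{n−1} by b_A(e_i, e_j) = 1 if i ≤ j and b_A(e_i, e_j) = 0 if i > j, for 1 ≤ i, j ≤ n−1. For a transposition t = (i j) of S_n with i < j, set α_t := e_i − e_j ∈ ℚ^{n−1} if j < n and α_t := e_i if j = n. Then for all distinct transpositions s, t of S_n such that st ≤ (1 2 … n) in the absolute order, b_A(α_s, α_t) = 0. -/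
/-- The vector `e_i ∈ ℚⁿ⁻¹` for `i` among the first `n-1` indices, and `0` for the
last index (`e_n := 0`). -/
def vecQ (n : ℕ) (i : Fin n) : Fin (n - 1) → ℚ :=
  fun k => if (k : ℕ) = (i : ℕ) then 1 else 0

/-- The bilinear form `b_A` on `ℚⁿ⁻¹` with `b_A(e_i, e_j) = 1` if `i ≤ j` and
`b_A(e_i, e_j) = 0` if `i > j`. -/
def bA (n : ℕ) (x y : Fin (n - 1) → ℚ) : ℚ :=
  ∑ i : Fin (n - 1), ∑ j : Fin (n - 1), if i ≤ j then x i * y j else 0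

/-! ### Auxiliary lemmas -/

section Aux

open LinearMap Module
open Fin.NatCast

lemma finSubVal {n : ℕ} [NeZero n] (x : Fin n) (e : ℕ) (he : e < n) :
    ((x - (e : Fin n)).val = x.val - e ∧ e ≤ x.val) ∨
    ((x - (e : Fin n)).val = x.val + n - e ∧ x.val < e) := by
  have hx := x.isLt
  have h : (x - (e : Fin n)).val = (n - e % n + x.val) % n := by
    rw [Fin.sub_def]; simp
  rw [Nat.mod_eq_of_lt he] at h
  rcases le_or_gt e x.val with hle | hlt
  · left
    refine ⟨?_, hle⟩
    rw [h, show n - e + x.val = n + (x.val - e) by omega, Nat.add_mod_left,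
      Nat.mod_eq_of_lt (by omega)]
  · right
    refine ⟨?_, hlt⟩
    rw [h, Nat.mod_eq_of_lt (by omega)]
    omega

lemma finRotateApply {n : ℕ} [NeZero n] (x : Fin n) : finRotate n x = x + 1 := by
  cases n with
  | zero => exact absurd rfl (NeZero.ne 0)
  | succ m => exact finRotate_succ_apply x

lemma runLemma {n : ℕ} [NeZero n] (i j k l : Fin n) (v : Fin n → ℚ)
    (hstep : ∀ y : Fin n, y ≠ i → y ≠ j → y ≠ k → y ≠ l → v y = v (y - ((1:ℕ) : Fin n))) :
    ∀ (d : ℕ) (x : Fin n),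
      (∀ e : ℕ, e < d → ((x - (e : Fin n)) ≠ i ∧ (x - (e : Fin n)) ≠ j ∧
        (x - (e : Fin n)) ≠ k ∧ (x - (e : Fin n)) ≠ l)) →
      v x = v (x - (d : Fin n)) := by
  intro d
  induction d with
  | zero => intro x _; simp
  | succ d ih =>
    intro x hcond
    have h1 : v x = v (x - (d : Fin n)) := ih x (fun e he => hcond e (by omega))
    obtain ⟨h2a, h2b, h2c, h2d⟩ := hcond d (by omega)
    have h3 := hstep (x - (d : Fin n)) h2a h2b h2c h2d
    rw [h1, h3]
    congr 1
    push_cast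
    abel

lemma reachLemma {n : ℕ} [NeZero n] (i j k l : Fin n) (v : Fin n → ℚ)
    (hstep : ∀ y : Fin n, y ≠ i → y ≠ j → y ≠ k → y ≠ l → v y = v (y - ((1:ℕ) : Fin n)))
    (x y : Fin n) (d : ℕ) (hd : d < n)
    (hxy : y.val + d = x.val ∨ y.val + d = x.val + n)
    (hcond : ∀ w : ℕ, w < n → (∃ e, e < d ∧ (w + e = x.val ∨ w + e = x.val + n)) →
      (w ≠ i.val ∧ w ≠ j.val ∧ w ≠ k.val ∧ w ≠ l.val)) :
    v x = v y := by
  have hy := y.isLt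
  have hx := x.isLt
  have h1 := runLemma i j k l v hstep d x ?_
  · have h2 : x - (d : Fin n) = y := by
      rcases finSubVal x d hd with ⟨hval, h⟩ | ⟨hval, h⟩ <;> exact Fin.ext (by omega)
    rwa [h2] at h1
  · intro e he
    rcases finSubVal x e (by omega) with ⟨hval, h⟩ | ⟨hval, h⟩ <;>
    · have hw := (x - (e : Fin n)).isLt
      obtain ⟨w1, w2, w3, w4⟩ := hcond (x - (e : Fin n)).val hw ⟨e, he, by omega⟩
      exact ⟨Fin.ne_of_val_ne w1, Fin.ne_of_val_ne w2, Fin.ne_of_val_ne w3, Fin.ne_of_val_ne w4⟩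

lemma crux1 {n : ℕ} [NeZero n] (hn : 2 ≤ n) (i j k l : Fin n) (v : Fin n → ℚ)
    (hik : i.val ≤ k.val) (hkj : k.val < j.val) (hjl : j.val ≤ l.val)
    (hne2 : ¬(i.val = k.val ∧ j.val = l.val))
    (hv : ∀ x, v (Equiv.swap k l (Equiv.swap i j (finRotate n x))) = v x) :
    ∀ x, v x = v i := by
  have hiv := i.isLt; have hjv := j.isLt; have hkv := k.isLt; have hlv := l.isLt
  have SE : ∀ y : Fin n, v (Equiv.swap k l (Equiv.swap i j y)) = v (y - ((1:ℕ) : Fin n)) := by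
    intro y
    have h := hv (y - ((1:ℕ) : Fin n))
    rwa [finRotateApply, Nat.cast_one, sub_add_cancel] at h
  have hstep : ∀ y : Fin n, y ≠ i → y ≠ j → y ≠ k → y ≠ l →
      v y = v (y - ((1:ℕ) : Fin n)) := by
    intro y h1 h2 h3 h4
    have h := SE y
    rwa [Equiv.swap_apply_of_ne_of_ne h1 h2, Equiv.swap_apply_of_ne_of_ne h3 h4] at h
  have R := reachLemma i j k l v hstep
  have rle : v (i - ((1:ℕ) : Fin n)) = v l := by
    rcases finSubVal i 1 (by omega) with ⟨hval, h⟩ | ⟨hval, h⟩ <;>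
    · refine R (i - ((1:ℕ) : Fin n)) l (i.val + n - 1 - l.val) (by omega) (by omega) ?_
      rintro w hw ⟨e, he, hc⟩
      exact ⟨by omega, by omega, by omega, by omega⟩
  have Ei : v (Equiv.swap k l j) = v l := by
    have h := SE i
    rwa [Equiv.swap_apply_left, rle] at h
  have rlk : v (j - ((1:ℕ) : Fin n)) = v k := by
    rcases finSubVal j 1 (by omega) with ⟨hval, h⟩ | ⟨hval, h⟩ <;>
    · refine R (j - ((1:ℕ) : Fin n)) k (j.val - 1 - k.val) (by omega) (by omega) ?_
      rintro w hw ⟨e, he, hc⟩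
      exact ⟨by omega, by omega, by omega, by omega⟩
  have Ej : v (Equiv.swap k l i) = v k := by
    have h := SE j
    rwa [Equiv.swap_apply_right, rlk] at h
  have key : v k = v i ∧ v j = v i ∧ v l = v i := by
    rcases eq_or_lt_of_le hik with hik' | hik'
    · -- i = k (hence j < l)
      have hieq : i = k := Fin.ext hik'
      have hjl' : j.val < l.val := by omega
      rw [Equiv.swap_apply_of_ne_of_ne (Fin.ne_of_val_ne (by omega))
        (Fin.ne_of_val_ne (by omega))] at Ei
      rw [hieq, Equiv.swap_apply_left] at Ej
      refine ⟨by rw [hieq], Ei.trans (Ej.trans (by rw [hieq])), Ej.trans (by rw [hieq])⟩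
    · -- i < k
      have rki : v (k - ((1:ℕ) : Fin n)) = v i := by
        rcases finSubVal k 1 (by omega) with ⟨hval, h⟩ | ⟨hval, h⟩ <;>
        · refine R (k - ((1:ℕ) : Fin n)) i (k.val - 1 - i.val) (by omega) (by omega) ?_
          rintro w hw ⟨e, he, hc⟩
          exact ⟨by omega, by omega, by omega, by omega⟩
      have Ek : v l = v i := by
        have h := SE k
        rwa [Equiv.swap_apply_of_ne_of_ne (show k ≠ i from Fin.ne_of_val_ne (by omega))
          (show k ≠ j from Fin.ne_of_val_ne (by omega)), Equiv.swap_apply_left, rki] at h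
      have Ej' : v i = v k := by
        rwa [Equiv.swap_apply_of_ne_of_ne (Fin.ne_of_val_ne (by omega))
          (Fin.ne_of_val_ne (by omega))] at Ej
      rcases eq_or_lt_of_le hjl with hjl' | hjl'
      · have hjeq : j = l := Fin.ext hjl'
        rw [hjeq, Equiv.swap_apply_right] at Ei
        exact ⟨Ej'.symm, by rw [hjeq]; exact Ek, Ek⟩
      · rw [Equiv.swap_apply_of_ne_of_ne (Fin.ne_of_val_ne (by omega))
          (Fin.ne_of_val_ne (by omega))] at Ei
        exact ⟨Ej'.symm, Ei.trans Ek, Ek⟩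
  obtain ⟨hKi, hJi, hLi⟩ := key
  intro x
  have hxv := x.isLt
  by_cases hx1 : x.val < i.val
  · have h := R x l (x.val + n - l.val) (by omega) (by omega) ?_
    · rw [h, hLi]
    rintro w hw ⟨e, he, hc⟩
    exact ⟨by omega, by omega, by omega, by omega⟩
  by_cases hx2 : x.val < k.val
  · exact R x i (x.val - i.val) (by omega) (by omega)
      (by rintro w hw ⟨e, he, hc⟩; exact ⟨by omega, by omega, by omega, by omega⟩)
  by_cases hx3 : x.val < j.val
  · have h := R x k (x.val - k.val) (by omega) (by omega) ?_
    · rw [h, hKi]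
    rintro w hw ⟨e, he, hc⟩
    exact ⟨by omega, by omega, by omega, by omega⟩
  by_cases hx4 : x.val < l.val
  · have h := R x j (x.val - j.val) (by omega) (by omega) ?_
    · rw [h, hJi]
    rintro w hw ⟨e, he, hc⟩
    exact ⟨by omega, by omega, by omega, by omega⟩
  · have h := R x l (x.val - l.val) (by omega) (by omega) ?_
    · rw [h, hLi]
    rintro w hw ⟨e, he, hc⟩
    exact ⟨by omega, by omega, by omega, by omega⟩

lemma crux2 {n : ℕ} [NeZero n] (hn : 2 ≤ n) (i j k l : Fin n) (v : Fin n → ℚ)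
    (hki : k.val < i.val) (hil : i.val ≤ l.val) (hlj : l.val < j.val)
    (hv : ∀ x, v (Equiv.swap k l (Equiv.swap i j (finRotate n x))) = v x) :
    ∀ x, v x = v i := by
  have hiv := i.isLt; have hjv := j.isLt; have hkv := k.isLt; have hlv := l.isLt
  have SE : ∀ y : Fin n, v (Equiv.swap k l (Equiv.swap i j y)) = v (y - ((1:ℕ) : Fin n)) := by
    intro y
    have h := hv (y - ((1:ℕ) : Fin n))
    rwa [finRotateApply, Nat.cast_one, sub_add_cancel] at h
  have hstep : ∀ y : Fin n, y ≠ i → y ≠ j → y ≠ k → y ≠ l →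
      v y = v (y - ((1:ℕ) : Fin n)) := by
    intro y h1 h2 h3 h4
    have h := SE y
    rwa [Equiv.swap_apply_of_ne_of_ne h1 h2, Equiv.swap_apply_of_ne_of_ne h3 h4] at h
  have R := reachLemma i j k l v hstep
  have rkj : v (k - ((1:ℕ) : Fin n)) = v j := by
    rcases finSubVal k 1 (by omega) with ⟨hval, h⟩ | ⟨hval, h⟩ <;>
    · refine R (k - ((1:ℕ) : Fin n)) j (k.val + n - 1 - j.val) (by omega) (by omega) ?_
      rintro w hw ⟨e, he, hc⟩
      exact ⟨by omega, by omega, by omega, by omega⟩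
  have Ek : v l = v j := by
    have h := SE k
    rwa [Equiv.swap_apply_of_ne_of_ne (show k ≠ i from Fin.ne_of_val_ne (by omega))
      (show k ≠ j from Fin.ne_of_val_ne (by omega)), Equiv.swap_apply_left, rkj] at h
  have rik : v (i - ((1:ℕ) : Fin n)) = v k := by
    rcases finSubVal i 1 (by omega) with ⟨hval, h⟩ | ⟨hval, h⟩ <;>
    · refine R (i - ((1:ℕ) : Fin n)) k (i.val - 1 - k.val) (by omega) (by omega) ?_
      rintro w hw ⟨e, he, hc⟩
      exact ⟨by omega, by omega, by omega, by omega⟩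
  have Ei : v j = v k := by
    have h := SE i
    rwa [Equiv.swap_apply_left,
      Equiv.swap_apply_of_ne_of_ne (show j ≠ k from Fin.ne_of_val_ne (by omega))
      (show j ≠ l from Fin.ne_of_val_ne (by omega)), rik] at h
  have rjl : v (j - ((1:ℕ) : Fin n)) = v l := by
    rcases finSubVal j 1 (by omega) with ⟨hval, h⟩ | ⟨hval, h⟩ <;>
    · refine R (j - ((1:ℕ) : Fin n)) l (j.val - 1 - l.val) (by omega) (by omega) ?_
      rintro w hw ⟨e, he, hc⟩
      exact ⟨by omega, by omega, by omega, by omega⟩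
  have Ej : v (Equiv.swap k l i) = v l := by
    have h := SE j
    rwa [Equiv.swap_apply_right, rjl] at h
  have key : v k = v i ∧ v j = v i ∧ v l = v i := by
    rcases eq_or_lt_of_le hil with hil' | hil'
    · -- i = l
      have hieq : i = l := Fin.ext hil'
      rw [hieq, Equiv.swap_apply_right] at Ej
      refine ⟨Ej.trans (by rw [hieq]), Ei.trans (Ej.trans (by rw [hieq])), by rw [hieq]⟩
    · -- i < l
      rw [Equiv.swap_apply_of_ne_of_ne (show i ≠ k from Fin.ne_of_val_ne (by omega))
        (show i ≠ l from Fin.ne_of_val_ne (by omega))] at Ej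
      have ril : v (l - ((1:ℕ) : Fin n)) = v i := by
        rcases finSubVal l 1 (by omega) with ⟨hval, h⟩ | ⟨hval, h⟩ <;>
        · refine R (l - ((1:ℕ) : Fin n)) i (l.val - 1 - i.val) (by omega) (by omega) ?_
          rintro w hw ⟨e, he, hc⟩
          exact ⟨by omega, by omega, by omega, by omega⟩
      have El : v k = v i := by
        have h := SE l
        rwa [Equiv.swap_apply_of_ne_of_ne (show l ≠ i from Fin.ne_of_val_ne (by omega))
          (show l ≠ j from Fin.ne_of_val_ne (by omega)), Equiv.swap_apply_right, ril] at h
      exact ⟨El, Ei.trans El, Ej.symm⟩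
  obtain ⟨hKi, hJi, hLi⟩ := key
  intro x
  have hxv := x.isLt
  by_cases hx1 : x.val < k.val
  · have h := R x j (x.val + n - j.val) (by omega) (by omega) ?_
    · rw [h, hJi]
    rintro w hw ⟨e, he, hc⟩
    exact ⟨by omega, by omega, by omega, by omega⟩
  by_cases hx2 : x.val < i.val
  · have h := R x k (x.val - k.val) (by omega) (by omega) ?_
    · rw [h, hKi]
    rintro w hw ⟨e, he, hc⟩
    exact ⟨by omega, by omega, by omega, by omega⟩
  by_cases hx3 : x.val < l.val
  · exact R x i (x.val - i.val) (by omega) (by omega)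
      (by rintro w hw ⟨e, he, hc⟩; exact ⟨by omega, by omega, by omega, by omega⟩)
  by_cases hx4 : x.val < j.val
  · have h := R x l (x.val - l.val) (by omega) (by omega) ?_
    · rw [h, hLi]
    rintro w hw ⟨e, he, hc⟩
    exact ⟨by omega, by omega, by omega, by omega⟩
  · have h := R x j (x.val - j.val) (by omega) (by omega) ?_
    · rw [h, hJi]
    rintro w hw ⟨e, he, hc⟩
    exact ⟨by omega, by omega, by omega, by omega⟩

lemma rank_swap_aux {n : ℕ} (a b : Fin n) (hab : a ≠ b) :
    finrank ℚ (range (funLeft ℚ ℚ ⇑(Equiv.swap a b) - LinearMap.id)) ≤ 1 := by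
  have hrange : range (funLeft ℚ ℚ ⇑(Equiv.swap a b) - LinearMap.id) ≤
      Submodule.span ℚ {((Pi.single a 1 - Pi.single b 1) : Fin n → ℚ)} := by
    rintro _ ⟨v, rfl⟩
    rw [Submodule.mem_span_singleton]
    refine ⟨v b - v a, ?_⟩
    funext x
    simp only [LinearMap.sub_apply, funLeft_apply, LinearMap.id_apply, Pi.smul_apply,
      Pi.sub_apply, smul_eq_mul]
    rcases eq_or_ne x a with rfl | hxa
    · rw [Equiv.swap_apply_left, Pi.single_eq_same, Pi.single_eq_of_ne hab]
      ring
    rcases eq_or_ne x b with rfl | hxb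
    · rw [Equiv.swap_apply_right, Pi.single_eq_same, Pi.single_eq_of_ne hxa]
      ring
    · rw [Equiv.swap_apply_of_ne_of_ne hxa hxb, Pi.single_eq_of_ne hxa,
        Pi.single_eq_of_ne hxb]
      ring
  refine le_trans (Submodule.finrank_mono hrange) ?_
  by_cases h0 : ((Pi.single a 1 - Pi.single b 1) : Fin n → ℚ) = 0
  · rw [h0, Submodule.span_zero_singleton]
    simp
  · rw [finrank_span_singleton h0]

lemma rank_bound {n : ℕ} (L : List (Equiv.Perm (Fin n))) (hL : ∀ t ∈ L, t.IsSwap) :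
    finrank ℚ (range (funLeft ℚ ℚ ⇑L.prod - LinearMap.id)) ≤ L.length := by
  induction L with
  | nil =>
    have : (funLeft ℚ ℚ ⇑((List.nil : List (Equiv.Perm (Fin n))).prod) - LinearMap.id)
        = 0 := by
      ext v z
      simp
    rw [this]
    simp
  | cons a L ih =>
    have ha : a.IsSwap := hL a (List.mem_cons_self (a := a) (l := L))
    have hL' : ∀ t ∈ L, t.IsSwap := fun t ht => hL t (List.mem_cons_of_mem _ ht)
    have hdecomp : funLeft ℚ ℚ ⇑((a :: L).prod) - LinearMap.id =
        (funLeft ℚ ℚ ⇑L.prod).comp (funLeft ℚ ℚ ⇑a - LinearMap.id) +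
          (funLeft ℚ ℚ ⇑L.prod - LinearMap.id) := by
      ext v z
      simp [List.prod_cons, Equiv.Perm.mul_apply]
    rw [hdecomp]
    have h1 : range ((funLeft ℚ ℚ ⇑L.prod).comp (funLeft ℚ ℚ ⇑a - LinearMap.id) +
        (funLeft ℚ ℚ ⇑L.prod - LinearMap.id)) ≤
        range ((funLeft ℚ ℚ ⇑L.prod).comp (funLeft ℚ ℚ ⇑a - LinearMap.id)) ⊔
        range (funLeft ℚ ℚ ⇑L.prod - LinearMap.id) := by
      rintro _ ⟨v, rfl⟩
      exact Submodule.add_mem_sup (mem_range_self _ v) (mem_range_self _ v)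
    refine le_trans (Submodule.finrank_mono h1) (le_trans
      (Submodule.finrank_add_le_finrank_add_finrank _ _) ?_)
    have h2 : finrank ℚ (range ((funLeft ℚ ℚ ⇑L.prod).comp
        (funLeft ℚ ℚ ⇑a - LinearMap.id))) ≤ 1 := by
      obtain ⟨x, y, hxy, rfl⟩ := ha
      refine le_trans ?_ (rank_swap_aux x y hxy)
      rw [LinearMap.range_comp]
      exact Submodule.finrank_map_le _ _
    have h3 := ih hL'
    simp only [List.length_cons]
    omega

lemma exists_fixed_nonconstant {n : ℕ} (hn : 2 ≤ n) (u : Equiv.Perm (Fin n))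
    (L : List (Equiv.Perm (Fin n))) (hL : ∀ t ∈ L, t.IsSwap) (hprod : L.prod = u)
    (hlen : L.length ≤ n - 2) :
    ∃ v : Fin n → ℚ, (∀ x, v (u x) = v x) ∧ ¬∃ c : ℚ, ∀ x, v x = c := by
  haveI : NeZero n := ⟨by omega⟩
  set f := funLeft ℚ ℚ ⇑u - LinearMap.id with hf
  have hrank : finrank ℚ (range f) ≤ n - 2 := by
    rw [hf, ← hprod]
    exact le_trans (rank_bound L hL) hlen
  have hrn := f.finrank_range_add_finrank_ker
  rw [Module.finrank_fin_fun] at hrn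
  have hker : 2 ≤ finrank ℚ (ker f) := by omega
  set c1 : Fin n → ℚ := fun _ => 1 with hc1
  have hc1ne : c1 ≠ 0 := by
    intro h
    have := congrFun h ⟨0, by omega⟩
    simp [hc1] at this
  have hnotle : ¬(ker f ≤ Submodule.span ℚ {c1}) := by
    intro hle
    have := Submodule.finrank_mono hle
    rw [finrank_span_singleton hc1ne] at this
    omega
  obtain ⟨v, hvker, hvspan⟩ := SetLike.not_le_iff_exists.1 hnotle
  refine ⟨v, ?_, ?_⟩
  · intro x
    have h0 : f v = 0 := LinearMap.mem_ker.1 hvker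
    rw [hf, LinearMap.sub_apply, LinearMap.id_apply, sub_eq_zero] at h0
    have h4 := congrFun h0 x
    simpa only [funLeft_apply] using h4
  · rintro ⟨c, hc⟩
    apply hvspan
    rw [Submodule.mem_span_singleton]
    exact ⟨c, funext fun x => by simp [hc1, hc x]⟩

lemma rotProd {n : ℕ} (hn : 2 ≤ n) : ∃ l : List (Equiv.Perm (Fin n)),
    l.length = n - 1 ∧ (∀ t ∈ l, t.IsSwap) ∧ l.prod = finRotate n := by
  haveI : NeZero n := ⟨by omega⟩
  set f : ℕ → Equiv.Perm (Fin n) := fun p =>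
    Equiv.swap ⟨p % n, Nat.mod_lt _ (by omega)⟩ ⟨(p + 1) % n, Nat.mod_lt _ (by omega)⟩ with hfdef
  have claim : ∀ m, m ≤ n - 1 → ∀ x : Fin n,
      ((((List.range m).map f).prod) x).val =
        if x.val = m then 0 else if x.val < m then x.val + 1 else x.val := by
    intro m
    induction m with
    | zero =>
      intro _ x
      simp only [List.range_zero, List.map_nil, List.prod_nil, Equiv.Perm.coe_one, id_eq]
      split_ifs <;> omega
    | succ m ih =>
      intro hm x
      rw [List.range_succ, List.map_append, List.prod_append]
      simp only [List.map_cons, List.map_nil, List.prod_cons, List.prod_nil, mul_one]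
      rw [Equiv.Perm.mul_apply]
      have hmn : m % n = m := Nat.mod_eq_of_lt (by omega)
      have hm1n : (m + 1) % n = m + 1 := Nat.mod_eq_of_lt (by omega)
      have hx := x.isLt
      rcases eq_or_ne x.val m with hxm | hxm
      · have hxeq : x = ⟨m % n, Nat.mod_lt _ (by omega)⟩ := Fin.ext (by simp [hmn, hxm])
        rw [hfdef]
        simp only
        rw [hxeq, Equiv.swap_apply_left, ih (by omega)]
        simp only [hm1n, hmn]
        split_ifs <;> omega
      rcases eq_or_ne x.val (m + 1) with hxm1 | hxm1
      · have hxeq : x = ⟨(m + 1) % n, Nat.mod_lt _ (by omega)⟩ := Fin.ext (by simp [hm1n, hxm1])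
        rw [hfdef]
        simp only
        rw [hxeq, Equiv.swap_apply_right, ih (by omega)]
        simp only [hmn]
        split_ifs <;> omega
      · rw [hfdef]
        simp only
        rw [Equiv.swap_apply_of_ne_of_ne (Fin.ne_of_val_ne (by simpa [hmn] using hxm))
          (Fin.ne_of_val_ne (by simpa [hm1n] using hxm1)), ih (by omega)]
        split_ifs <;> omega
  refine ⟨(List.range (n - 1)).map f, by simp, ?_, ?_⟩
  · intro t ht
    obtain ⟨p, hp, rfl⟩ := List.mem_map.1 ht
    rw [List.mem_range] at hp
    exact ⟨_, _, Fin.ne_of_val_ne (by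
      simp only
      rw [Nat.mod_eq_of_lt (by omega), Nat.mod_eq_of_lt (by omega)]
      omega), rfl⟩
  · apply Equiv.ext
    intro x
    apply Fin.ext
    rw [claim (n - 1) le_rfl x]
    have hx := x.isLt
    have hrot : (finRotate n x).val = (x.val + 1) % n := by
      cases n with
      | zero => omega
      | succ m =>
        rw [finRotate_succ_apply, Fin.val_add_one]
        rcases eq_or_ne x (Fin.last m) with rfl | hne
        · simp
        · rw [if_neg hne]
          have : x.val ≠ m := fun h => hne (Fin.ext (by simp [h]))
          rw [Nat.mod_eq_of_lt (by omega)]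
    rw [hrot]
    have h2 : (x.val + 1) % n = if x.val = n - 1 then 0 else x.val + 1 := by
      split_ifs with h
      · rw [h, show n - 1 + 1 = n by omega, Nat.mod_self]
      · exact Nat.mod_eq_of_lt (by omega)
    rw [h2]
    split_ifs <;> omega

lemma bA_sub_left (n : ℕ) (x x' y : Fin (n - 1) → ℚ) :
    bA n (x - x') y = bA n x y - bA n x' y := by
  unfold bA
  rw [← Finset.sum_sub_distrib]
  refine Finset.sum_congr rfl fun p _ => ?_
  rw [← Finset.sum_sub_distrib]
  refine Finset.sum_congr rfl fun q _ => ?_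
  simp only [Pi.sub_apply]
  split_ifs <;> ring

lemma bA_sub_right (n : ℕ) (x y y' : Fin (n - 1) → ℚ) :
    bA n x (y - y') = bA n x y - bA n x y' := by
  unfold bA
  rw [← Finset.sum_sub_distrib]
  refine Finset.sum_congr rfl fun p _ => ?_
  rw [← Finset.sum_sub_distrib]
  refine Finset.sum_congr rfl fun q _ => ?_
  simp only [Pi.sub_apply]
  split_ifs <;> ring

lemma bA_single (n : ℕ) (a b : Fin n) :
    bA n (vecQ n a) (vecQ n b) =
      if a.val ≤ b.val ∧ a.val < n - 1 ∧ b.val < n - 1 then 1 else 0 := by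
  by_cases ha : a.val < n - 1
  · by_cases hb : b.val < n - 1
    · set pa : Fin (n - 1) := ⟨a.val, ha⟩ with hpa
      set qb : Fin (n - 1) := ⟨b.val, hb⟩ with hqb
      have hsummand : ∀ p q : Fin (n - 1),
          (if p ≤ q then vecQ n a p * vecQ n b q else 0) =
          if p = pa then (if q = qb then (if p ≤ q then (1:ℚ) else 0) else 0) else 0 := by
        intro p q
        unfold vecQ
        by_cases h1 : p = pa
        · by_cases h2 : q = qb
          · subst h1; subst h2
            simp only [hpa, hqb, if_pos rfl]
            split_ifs <;> simp_all
          · have : (q : ℕ) ≠ b.val := fun h => h2 (Fin.ext h)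
            rw [if_pos h1, if_neg h2, if_neg this]
            split_ifs <;> simp_all [hpa]
        · have : (p : ℕ) ≠ a.val := fun h => h1 (Fin.ext h)
          rw [if_neg h1, if_neg this]
          split_ifs <;> simp
      unfold bA
      rw [Finset.sum_congr rfl fun p _ => Finset.sum_congr rfl fun q _ => hsummand p q]
      have hinner : ∀ p : Fin (n - 1),
          (∑ q : Fin (n - 1), if p = pa then
            (if q = qb then (if p ≤ q then (1:ℚ) else 0) else 0) else 0) =
          if p = pa then (if p ≤ qb then (1:ℚ) else 0) else 0 := by
        intro p
        by_cases h1 : p = pa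
        · simp only [if_pos h1]
          rw [Finset.sum_ite_eq' Finset.univ qb]
          simp
        · simp [if_neg h1]
      rw [Finset.sum_congr rfl fun p _ => hinner p]
      rw [Finset.sum_ite_eq' Finset.univ pa]
      simp only [Finset.mem_univ, if_pos]
      have : pa ≤ qb ↔ a.val ≤ b.val := by
        rw [Fin.le_def]
      split_ifs <;> simp_all
    · have hzero : vecQ n b = fun _ => 0 := by
        funext q
        exact if_neg (by have := q.isLt; omega)
      unfold bA
      rw [hzero]
      rw [if_neg (by omega)]
      simp
  · have hzero : vecQ n a = fun _ => 0 := by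
      funext q
      exact if_neg (by have := q.isLt; omega)
    unfold bA
    rw [hzero]
    rw [if_neg (by omega)]
    simp

lemma absSet_nonempty {n : ℕ} (w : Equiv.Perm (Fin n)) :
    {k : ℕ | ∃ l : List (Equiv.Perm (Fin n)), l.length = k ∧
      (∀ t ∈ l, t ∈ {t : Equiv.Perm (Fin n) | t.IsSwap}) ∧ l.prod = w}.Nonempty := by
  obtain ⟨l, hp, hsw⟩ := (Equiv.Perm.truncSwapFactors w).out
  exact ⟨l.length, l, rfl, fun t ht => hsw t ht, hp⟩

end Aux

/-- If `s = (i j)` and `t = (k l)` are distinct transpositions of `Sₙ` with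
`s * t ≤ (1 2 … n)` in the absolute order, then `b_A(α_s, α_t) = 0`, where
`α_{(i j)} = e_i - e_j` with the convention `e_n = 0`. -/
theorem bA_vanishes_on_subordinate_roots (n : ℕ) (hn : 2 ≤ n) (i j k l : Fin n)
    (hij : i < j) (hkl : k < l) (hne : Equiv.swap i j ≠ Equiv.swap k l)
    (hle : absLe {t : Equiv.Perm (Fin n) | t.IsSwap}
      (Equiv.swap i j * Equiv.swap k l) (finRotate n)) :
    bA n (vecQ n i - vecQ n j) (vecQ n k - vecQ n l) = 0 := by
  haveI : NeZero n := ⟨by omega⟩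
  have hiv := i.isLt; have hjv := j.isLt; have hkv := k.isLt; have hlv := l.isLt
  have hijv : i.val < j.val := hij
  have hklv : k.val < l.val := hkl
  -- the contradiction machine for the two "crossing" configurations
  have hbad : ∀ (hcrux : ∀ v : Fin n → ℚ,
      (∀ x, v (Equiv.swap k l (Equiv.swap i j (finRotate n x))) = v x) →
      ∀ x, v x = v i), False := by
    intro hcrux
    unfold absLe at hle
    have hcle : absLength {t : Equiv.Perm (Fin n) | t.IsSwap} (finRotate n) ≤ n - 1 := by
      obtain ⟨l', h1, h2, h3⟩ := rotProd (n := n) hn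
      exact Nat.sInf_le ⟨l', h1, fun t ht => h2 t ht, h3⟩
    have hstpos : 1 ≤ absLength {t : Equiv.Perm (Fin n) | t.IsSwap}
        (Equiv.swap i j * Equiv.swap k l) := by
      by_contra hcon
      push_neg at hcon
      have h0 : absLength {t : Equiv.Perm (Fin n) | t.IsSwap}
          (Equiv.swap i j * Equiv.swap k l) = 0 := by omega
      have hmem := Nat.sInf_mem (absSet_nonempty (Equiv.swap i j * Equiv.swap k l))
      rw [show sInf {k_1 : ℕ | ∃ l_1 : List (Equiv.Perm (Fin n)), l_1.length = k_1 ∧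
          (∀ t ∈ l_1, t ∈ {t : Equiv.Perm (Fin n) | t.IsSwap}) ∧
          l_1.prod = Equiv.swap i j * Equiv.swap k l} = absLength
          {t : Equiv.Perm (Fin n) | t.IsSwap} (Equiv.swap i j * Equiv.swap k l) from rfl,
        h0] at hmem
      obtain ⟨l0, hlen0, _, hprod0⟩ := hmem
      rw [List.length_eq_zero_iff] at hlen0
      subst hlen0
      simp only [List.prod_nil] at hprod0
      have : Equiv.swap i j = (Equiv.swap k l)⁻¹ := by
        rw [eq_inv_iff_mul_eq_one]
        exact hprod0.symm
      rw [Equiv.swap_inv] at this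
      exact hne this
    have hul : absLength {t : Equiv.Perm (Fin n) | t.IsSwap}
        ((Equiv.swap i j * Equiv.swap k l)⁻¹ * finRotate n) ≤ n - 2 := by omega
    have hmem := Nat.sInf_mem (absSet_nonempty
      ((Equiv.swap i j * Equiv.swap k l)⁻¹ * finRotate n))
    obtain ⟨L, hLlen, hLsw, hLprod⟩ := hmem
    obtain ⟨v, hvfix, hvnc⟩ := exists_fixed_nonconstant hn _ L (fun t ht => hLsw t ht)
      hLprod (by rw [hLlen]; exact hul)
    have hform : ∀ x, v (Equiv.swap k l (Equiv.swap i j (finRotate n x))) = v x := by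
      intro x
      have h := hvfix x
      simpa [Equiv.Perm.mul_apply, mul_inv_rev, Equiv.swap_inv] using h
    exact hvnc ⟨v i, hcrux v hform⟩
  by_cases hP : i.val ≤ k.val ∧ k.val < j.val <;>
    by_cases hQ : i.val ≤ l.val ∧ l.val < j.val
  · -- both inside: noncrossing, compute
    rw [bA_sub_left, bA_sub_right, bA_sub_right, bA_single, bA_single, bA_single, bA_single]
    split_ifs <;> first | omega | norm_num
  · -- family 1 : i ≤ k < j ≤ l
    exfalso
    rw [not_and, not_lt] at hQ
    have hjl : j.val ≤ l.val := hQ (by omega)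
    have hne2 : ¬(i.val = k.val ∧ j.val = l.val) := by
      rintro ⟨h1, h2⟩
      exact hne (by rw [show i = k from Fin.ext h1, show j = l from Fin.ext h2])
    exact hbad fun v hv => crux1 hn i j k l v hP.1 hP.2 hjl hne2 hv
  · -- family 2 : k < i ≤ l < j
    exfalso
    have hki : k.val < i.val := by
      rcases not_and_or.1 hP with h | h
      · omega
      · omega
    exact hbad fun v hv => crux2 hn i j k l v hki hQ.1 hQ.2 hv
  · -- both outside: noncrossing, compute
    rw [not_and, not_lt] at hP hQ
    rw [bA_sub_left, bA_sub_right, bA_sub_right, bA_single, bA_single, bA_single, bA_single]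
    have hP' : ¬(i.val ≤ k.val) ∨ j.val ≤ k.val := by
      by_cases h : i.val ≤ k.val
      · exact Or.inr (hP h)
      · exact Or.inl h
    have hQ' : ¬(i.val ≤ l.val) ∨ j.val ≤ l.val := by
      by_cases h : i.val ≤ l.val
      · exact Or.inr (hQ h)
      · exact Or.inl h
    split_ifs <;> first | omega | norm_num
end

section
/- Let n ≥ 2. Define a bilinear form b_B on ℚ^n by b_B(e_i, e_j) = 1 if i ≤ j and b_B(e_i, e_j) = −1 if i > j, for 1 ≤ i, j ≤ n. For reflections of W(B_n), define roots in ℚ^n by α_{⦅i j⦆} := e_i − e_j for 1 ≤ i < j ≤ n, α_{⦅i (−j)⦆} := e_i + e_j for 1 ≤ i < j ≤ n, and α_{[i]} := e_i for 1 ≤ i ≤ n. Then for all distinct reflections s, t ∈ T(B_n) such that st ≤ c in the absolute order, b_B(α_s, α_t) = 0. -/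
/-- The set of reflections `T(Bₙ)` of the signed symmetric group. -/
def reflB (n : ℕ) : Set (Equiv.Perm ℤ) :=
  {t | (∃ i j : ℤ, 1 ≤ i ∧ i < |j| ∧ |j| ≤ (n : ℤ) ∧
          t = Equiv.swap i j * Equiv.swap (-i) (-j)) ∨
        ∃ i : ℤ, 1 ≤ i ∧ i ≤ (n : ℤ) ∧ t = Equiv.swap i (-i)}

/-- The standard basis vector `e_i ∈ ℚⁿ`, for `1 ≤ i ≤ n` (`1`-indexed). -/
def evQ (n : ℕ) (i : ℤ) : Fin n → ℚ :=
  fun k => if ((k : ℕ) : ℤ) + 1 = i then 1 else 0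

/-- `t` is a reflection of `W(Bₙ)` with associated root `a`:
`α_⦅i j⦆ = e_i - e_j`, `α_⦅i (-j)⦆ = e_i + e_j` (for `1 ≤ i < j ≤ n`), and
`α_[i] = e_i` (for `1 ≤ i ≤ n`). -/
def IsReflRootB (n : ℕ) (t : Equiv.Perm ℤ) (a : Fin n → ℚ) : Prop :=
  (∃ i j : ℤ, 1 ≤ i ∧ i < j ∧ j ≤ (n : ℤ) ∧
      t = Equiv.swap i j * Equiv.swap (-i) (-j) ∧ a = evQ n i - evQ n j) ∨
    (∃ i j : ℤ, 1 ≤ i ∧ i < j ∧ j ≤ (n : ℤ) ∧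
      t = Equiv.swap i (-j) * Equiv.swap (-i) j ∧ a = evQ n i + evQ n j) ∨
    ∃ i : ℤ, 1 ≤ i ∧ i ≤ (n : ℤ) ∧ t = Equiv.swap i (-i) ∧ a = evQ n i

/-- The bilinear form `b_B` on `ℚⁿ` with `b_B(e_i, e_j) = 1` if `i ≤ j` and
`b_B(e_i, e_j) = -1` if `i > j`. -/
def bB (n : ℕ) (x y : Fin n → ℚ) : ℚ :=
  ∑ i : Fin n, ∑ j : Fin n, if i ≤ j then x i * y j else -(x i * y j)

namespace BnAux


/-- extension of a vector in ℚ^n to an odd function on ℤ supported in [-n,n] -/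
def extQ (n : ℕ) (x : Fin n → ℚ) (j : ℤ) : ℚ :=
  if h : 1 ≤ j ∧ j ≤ (n:ℤ) then x ⟨(j-1).toNat, by omega⟩
  else if h' : 1 ≤ -j ∧ -j ≤ (n:ℤ) then -(x ⟨(-j-1).toNat, by omega⟩) else 0

def dot {n : ℕ} (x y : Fin n → ℚ) : ℚ := ∑ k, x k * y k

lemma extQ_pos {n : ℕ} (x : Fin n → ℚ) {j : ℤ} (h1 : 1 ≤ j) (h2 : j ≤ (n:ℤ)) :
    extQ n x j = x ⟨(j-1).toNat, by omega⟩ := by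
  rw [extQ, dif_pos ⟨h1, h2⟩]

lemma extQ_negr {n : ℕ} (x : Fin n → ℚ) {j : ℤ} (h1 : 1 ≤ -j) (h2 : -j ≤ (n:ℤ)) :
    extQ n x j = -(x ⟨(-j-1).toNat, by omega⟩) := by
  rw [extQ, dif_neg (by omega), dif_pos ⟨h1, h2⟩]

lemma extQ_zero {n : ℕ} (x : Fin n → ℚ) {j : ℤ} (h : j < -(n:ℤ) ∨ j = 0 ∨ (n:ℤ) < j) :
    extQ n x j = 0 := by
  rw [extQ, dif_neg (by omega), dif_neg (by omega)]

lemma extQ_coord {n : ℕ} (x : Fin n → ℚ) (k : Fin n) :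
    extQ n x (((k : ℕ) : ℤ) + 1) = x k := by
  rw [extQ_pos x (by omega) (by exact_mod_cast by omega : ((k:ℕ):ℤ) + 1 ≤ (n:ℤ))]
  congr 1
  ext
  simp

lemma evQ_val {n : ℕ} (i m : ℤ) (h1 : 1 ≤ m) (h2 : m ≤ (n:ℤ)) :
    evQ n i ⟨(m-1).toNat, by omega⟩ = if i = m then 1 else 0 := by
  unfold evQ
  by_cases h : i = m
  · rw [if_pos (by simp; omega), if_pos h]
  · rw [if_neg (by simp; omega), if_neg h]

lemma dot_evQ {n : ℕ} (i : ℤ) (h1 : 1 ≤ i) (h2 : i ≤ (n:ℤ)) (x : Fin n → ℚ) :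
    dot (evQ n i) x = x ⟨(i-1).toNat, by omega⟩ := by
  have key : ∀ k : Fin n, evQ n i k * x k
      = if k = (⟨(i-1).toNat, by omega⟩ : Fin n) then x k else 0 := by
    intro k
    by_cases hk : k = (⟨(i-1).toNat, by omega⟩ : Fin n)
    · rw [if_pos hk, hk]
      unfold evQ
      rw [if_pos (by simp; omega)]
      ring
    · rw [if_neg hk]
      unfold evQ
      have hcne : ¬(((k:ℕ):ℤ) + 1 = i) := by
        intro hc
        apply hk
        rw [Fin.ext_iff]
        show (k:ℕ) = (i-1).toNat
        omega
      rw [if_neg hcne, zero_mul]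
  unfold dot
  rw [Finset.sum_congr rfl (fun k _ => key k), Finset.sum_ite_eq' Finset.univ _ _,
    if_pos (Finset.mem_univ _)]

lemma dot_sub_left {n : ℕ} (x y z : Fin n → ℚ) : dot (x - y) z = dot x z - dot y z := by
  unfold dot; simp [sub_mul, Finset.sum_sub_distrib]

lemma dot_add_left {n : ℕ} (x y z : Fin n → ℚ) : dot (x + y) z = dot x z + dot y z := by
  unfold dot; simp [add_mul, Finset.sum_add_distrib]

lemma dot_comm {n : ℕ} (x y : Fin n → ℚ) : dot x y = dot y x := by
  unfold dot; exact Finset.sum_congr rfl fun k _ => mul_comm _ _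

lemma dot_indicator {n : ℕ} (f : Fin n → ℚ) (k : Fin n) :
    dot f (fun m => if m = k then 1 else 0) = f k := by
  unfold dot
  have key : ∀ m : Fin n, f m * (fun m => if m = k then (1:ℚ) else 0) m
      = if m = k then f m else 0 := by
    intro m; by_cases h : m = k <;> simp [h]
  rw [Finset.sum_congr rfl fun m _ => key m,
    Finset.sum_ite_eq' Finset.univ _ _, if_pos (Finset.mem_univ _)]

lemma dot_self_ne_zero {n : ℕ} {d : Fin n → ℚ} (hd : d ≠ 0) : dot d d ≠ 0 := by
  intro h
  apply hd
  funext k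
  have h0 : ∀ m ∈ Finset.univ, (0:ℚ) ≤ d m * d m := fun m _ => mul_self_nonneg _
  have := (Finset.sum_eq_zero_iff_of_nonneg h0).1 h k (Finset.mem_univ k)
  have := mul_self_eq_zero.1 this
  simpa using this


/-- application of a "long" reflection -/
lemma swap2_apply (i j m : ℤ) (d1 : i ≠ j) (d2 : i ≠ -j) (d3 : i ≠ -i) (d4 : j ≠ -j) :
    (Equiv.swap i j * Equiv.swap (-i) (-j)) m =
      if m = i then j else if m = j then i else
        if m = -i then -j else if m = -j then -i else m := by
  rw [Equiv.Perm.mul_apply, Equiv.swap_apply_def, Equiv.swap_apply_def]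
  split_ifs <;> omega

/-- application of a "long" reflection, second form -/
lemma swap2b_apply (i j m : ℤ) (h1 : 1 ≤ i) (h2 : i < j) :
    (Equiv.swap i (-j) * Equiv.swap (-i) j) m =
      if m = i then -j else if m = -j then i else
        if m = -i then j else if m = j then -i else m := by
  rw [Equiv.Perm.mul_apply, Equiv.swap_apply_def, Equiv.swap_apply_def]
  split_ifs <;> omega

/-- application of a "short" reflection -/
lemma swap1_apply (i m : ℤ) :
    (Equiv.swap i (-i)) m = if m = i then -i else if m = -i then i else m := by
  rw [Equiv.swap_apply_def]

lemma refl_sq {n : ℕ} {s : Equiv.Perm ℤ} {a : Fin n → ℚ} (hs : IsReflRootB n s a) :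
    s * s = 1 := by
  rcases hs with ⟨i, j, h1, h2, h3, hseq, -⟩ | ⟨i, j, h1, h2, h3, hseq, -⟩ |
    ⟨i, h1, h2, hseq, -⟩ <;> subst hseq <;> ext m <;>
    rw [Equiv.Perm.mul_apply, Equiv.Perm.one_apply]
  · rw [swap2_apply i j _ (by omega) (by omega) (by omega) (by omega),
      swap2_apply i j m (by omega) (by omega) (by omega) (by omega)]
    split_ifs <;> omega
  · rw [swap2b_apply i j _ h1 h2, swap2b_apply i j m h1 h2]
    split_ifs <;> omega
  · rw [swap1_apply i _, swap1_apply i m]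
    split_ifs <;> omega

lemma refl_mem {n : ℕ} {s : Equiv.Perm ℤ} {a : Fin n → ℚ} (hs : IsReflRootB n s a) :
    s ∈ reflB n := by
  rcases hs with ⟨i, j, h1, h2, h3, hseq, -⟩ | ⟨i, j, h1, h2, h3, hseq, -⟩ |
    ⟨i, h1, h2, hseq, -⟩
  · exact Or.inl ⟨i, j, h1, by rw [abs_of_pos (by omega)]; omega,
      by rw [abs_of_pos (by omega)]; omega, hseq⟩
  · refine Or.inl ⟨i, -j, h1, by rw [abs_neg, abs_of_pos (by omega)]; omega,
      by rw [abs_neg, abs_of_pos (by omega)]; omega, ?_⟩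
    rw [neg_neg]; exact hseq
  · exact Or.inr ⟨i, h1, h2, hseq⟩

lemma reflB_has_root {n : ℕ} {w : Equiv.Perm ℤ} (hw : w ∈ reflB n) :
    ∃ a : Fin n → ℚ, IsReflRootB n w a := by
  rcases hw with ⟨i, j, h1, h2, h3, hweq⟩ | ⟨i, h1, h2, hweq⟩
  · rcases lt_or_ge 0 j with hj | hj
    · rw [abs_of_pos hj] at h2 h3
      exact ⟨_, Or.inl ⟨i, j, h1, h2, h3, hweq, rfl⟩⟩
    · have hj' : j < 0 := by
        rcases hj.lt_or_eq with h | h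
        · exact h
        · exfalso; rw [h] at h2; simp at h2; omega
      rw [abs_of_neg hj'] at h2 h3
      refine ⟨_, Or.inr (Or.inl ⟨i, -j, h1, h2, h3, ?_, rfl⟩)⟩
      rw [neg_neg]; exact hweq
  · exact ⟨_, Or.inr (Or.inr ⟨i, h1, h2, hweq, rfl⟩)⟩

/-- closed forms for extQ of roots -/
lemma extQ_root1 {n : ℕ} (i j : ℤ) (h1 : 1 ≤ i) (h2 : i < j) (h3 : j ≤ (n:ℤ)) (m : ℤ) :
    extQ n (evQ n i - evQ n j) m =
      if m = i then 1 else if m = j then -1 else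
        if m = -i then -1 else if m = -j then 1 else 0 := by
  rcases le_or_gt m (-1) with hm | hm
  · rcases le_or_gt (-(n:ℤ)) m with hm2 | hm2
    · rw [extQ_negr _ (by omega) (by omega), Pi.sub_apply,
        evQ_val i (-m) (by omega) (by omega),
        evQ_val j (-m) (by omega) (by omega)]
      split_ifs <;> first | (exfalso; omega) | norm_num
    · rw [extQ_zero _ (by omega)]
      split_ifs <;> first | (exfalso; omega) | norm_num
  · rcases le_or_gt m 0 with hm1 | hm1
    · rw [extQ_zero _ (by omega)]
      split_ifs <;> first | (exfalso; omega) | norm_num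
    · rcases le_or_gt m (n:ℤ) with hm2 | hm2
      · rw [extQ_pos _ (by omega) (by omega), Pi.sub_apply,
          evQ_val i m (by omega) (by omega), evQ_val j m (by omega) (by omega)]
        split_ifs <;> first | (exfalso; omega) | norm_num
      · rw [extQ_zero _ (by omega)]
        split_ifs <;> first | (exfalso; omega) | norm_num

lemma extQ_root2 {n : ℕ} (i j : ℤ) (h1 : 1 ≤ i) (h2 : i < j) (h3 : j ≤ (n:ℤ)) (m : ℤ) :
    extQ n (evQ n i + evQ n j) m =
      if m = i then 1 else if m = -j then -1 else
        if m = -i then -1 else if m = j then 1 else 0 := by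
  rcases le_or_gt m (-1) with hm | hm
  · rcases le_or_gt (-(n:ℤ)) m with hm2 | hm2
    · rw [extQ_negr _ (by omega) (by omega), Pi.add_apply,
        evQ_val i (-m) (by omega) (by omega),
        evQ_val j (-m) (by omega) (by omega)]
      split_ifs <;> first | (exfalso; omega) | norm_num
    · rw [extQ_zero _ (by omega)]
      split_ifs <;> first | (exfalso; omega) | norm_num
  · rcases le_or_gt m 0 with hm1 | hm1
    · rw [extQ_zero _ (by omega)]
      split_ifs <;> first | (exfalso; omega) | norm_num
    · rcases le_or_gt m (n:ℤ) with hm2 | hm2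
      · rw [extQ_pos _ (by omega) (by omega), Pi.add_apply,
          evQ_val i m (by omega) (by omega), evQ_val j m (by omega) (by omega)]
        split_ifs <;> first | (exfalso; omega) | norm_num
      · rw [extQ_zero _ (by omega)]
        split_ifs <;> first | (exfalso; omega) | norm_num

lemma extQ_root3 {n : ℕ} (i : ℤ) (h1 : 1 ≤ i) (h3 : i ≤ (n:ℤ)) (m : ℤ) :
    extQ n (evQ n i) m =
      if m = i then 1 else if m = -i then -1 else 0 := by
  rcases le_or_gt m (-1) with hm | hm
  · rcases le_or_gt (-(n:ℤ)) m with hm2 | hm2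
    · rw [extQ_negr _ (by omega) (by omega),
        evQ_val i (-m) (by omega) (by omega)]
      split_ifs <;> first | (exfalso; omega) | norm_num
    · rw [extQ_zero _ (by omega)]
      split_ifs <;> first | (exfalso; omega) | norm_num
  · rcases le_or_gt m 0 with hm1 | hm1
    · rw [extQ_zero _ (by omega)]
      split_ifs <;> first | (exfalso; omega) | norm_num
    · rcases le_or_gt m (n:ℤ) with hm2 | hm2
      · rw [extQ_pos _ (by omega) (by omega), evQ_val i m (by omega) (by omega)]
        split_ifs <;> first | (exfalso; omega) | norm_num
      · rw [extQ_zero _ (by omega)]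
        split_ifs <;> first | (exfalso; omega) | norm_num



lemma x_reindex {n : ℕ} (x : Fin n → ℚ) {p q : ℤ} (hpq : p = q)
    (hp : p.toNat < n) (hq : q.toNat < n) : x ⟨p.toNat, hp⟩ = x ⟨q.toNat, hq⟩ := by
  subst hpq; rfl

lemma extQ_negr2 {n : ℕ} (x : Fin n → ℚ) {j : ℤ} (h1 : 1 ≤ j) (h2 : j ≤ (n:ℤ)) :
    extQ n x (-j) = -(x ⟨(j-1).toNat, by omega⟩) := by
  rw [extQ_negr x (by omega) (by omega),
    x_reindex x (show (-(-j) - 1 : ℤ) = j - 1 by ring) (by omega) (by omega)]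

/-- The key reflection-action formula. -/
lemma act {n : ℕ} {s : Equiv.Perm ℤ} {a : Fin n → ℚ} (hs : IsReflRootB n s a)
    (x : Fin n → ℚ) (m : ℤ) :
    extQ n x (s m) = extQ n x m - (2 * dot a x / dot a a) * extQ n a m := by
  rcases hs with ⟨i, j, h1, h2, h3, hseq, haeq⟩ | ⟨i, j, h1, h2, h3, hseq, haeq⟩ |
    ⟨i, h1, h3, hseq, haeq⟩
  · have hdax : ∀ y : Fin n → ℚ,
        dot a y = y ⟨(i-1).toNat, by omega⟩ - y ⟨(j-1).toNat, by omega⟩ := by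
      intro y
      rw [haeq, dot_sub_left, dot_evQ i (by omega) (by omega),
        dot_evQ j (by omega) (by omega)]
    have hdaa : dot a a = 2 := by
      rw [hdax a, haeq]
      simp only [Pi.sub_apply]
      rw [evQ_val i i (by omega) (by omega), evQ_val j i (by omega) (by omega),
        evQ_val i j (by omega) (by omega), evQ_val j j (by omega) (by omega)]
      rw [if_pos rfl, if_pos rfl, if_neg (by omega), if_neg (by omega)]
      norm_num
    have hco : 2 * dot a x / dot a a = dot a x := by rw [hdaa]; field_simp
    rw [hco, hseq, swap2_apply i j m (by omega) (by omega) (by omega) (by omega),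
      haeq, extQ_root1 i j h1 h2 h3 m, ← haeq, hdax x]
    by_cases e1 : m = i
    · rw [if_pos e1, if_pos e1, e1, extQ_pos x (by omega : (1:ℤ) ≤ j) h3,
        extQ_pos x (by omega : (1:ℤ) ≤ i) (by omega)]
      ring
    · rw [if_neg e1, if_neg e1]
      by_cases e2 : m = j
      · rw [if_pos e2, if_pos e2, e2, extQ_pos x (by omega : (1:ℤ) ≤ i) (by omega),
          extQ_pos x (by omega : (1:ℤ) ≤ j) h3]
        ring
      · rw [if_neg e2, if_neg e2]
        by_cases e3 : m = -i
        · rw [if_pos e3, if_pos e3, e3, extQ_negr2 x (by omega : (1:ℤ) ≤ j) h3,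
            extQ_negr2 x (by omega : (1:ℤ) ≤ i) (by omega)]
          ring
        · rw [if_neg e3, if_neg e3]
          by_cases e4 : m = -j
          · rw [if_pos e4, if_pos e4, e4, extQ_negr2 x (by omega : (1:ℤ) ≤ i) (by omega),
              extQ_negr2 x (by omega : (1:ℤ) ≤ j) h3]
            ring
          · rw [if_neg e4, if_neg e4]
            ring
  · have hdax : ∀ y : Fin n → ℚ,
        dot a y = y ⟨(i-1).toNat, by omega⟩ + y ⟨(j-1).toNat, by omega⟩ := by
      intro y
      rw [haeq, dot_add_left, dot_evQ i (by omega) (by omega),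
        dot_evQ j (by omega) (by omega)]
    have hdaa : dot a a = 2 := by
      rw [hdax a, haeq]
      simp only [Pi.add_apply]
      rw [evQ_val i i (by omega) (by omega), evQ_val j i (by omega) (by omega),
        evQ_val i j (by omega) (by omega), evQ_val j j (by omega) (by omega)]
      rw [if_pos rfl, if_pos rfl, if_neg (by omega), if_neg (by omega)]
      norm_num
    have hco : 2 * dot a x / dot a a = dot a x := by rw [hdaa]; field_simp
    rw [hco, hseq, swap2b_apply i j m h1 h2,
      haeq, extQ_root2 i j h1 h2 h3 m, ← haeq, hdax x]
    by_cases e1 : m = i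
    · rw [if_pos e1, if_pos e1, e1, extQ_negr2 x (by omega : (1:ℤ) ≤ j) h3,
        extQ_pos x (by omega : (1:ℤ) ≤ i) (by omega)]
      ring
    · rw [if_neg e1, if_neg e1]
      by_cases e2 : m = -j
      · rw [if_pos e2, if_pos e2, e2, extQ_pos x (by omega : (1:ℤ) ≤ i) (by omega),
          extQ_negr2 x (by omega : (1:ℤ) ≤ j) h3]
        ring
      · rw [if_neg e2, if_neg e2]
        by_cases e3 : m = -i
        · rw [if_pos e3, if_pos e3, e3, extQ_pos x (by omega : (1:ℤ) ≤ j) h3,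
            extQ_negr2 x (by omega : (1:ℤ) ≤ i) (by omega)]
          ring
        · rw [if_neg e3, if_neg e3]
          by_cases e4 : m = j
          · rw [if_pos e4, if_pos e4, e4, extQ_negr2 x (by omega : (1:ℤ) ≤ i) (by omega),
              extQ_pos x (by omega : (1:ℤ) ≤ j) h3]
            ring
          · rw [if_neg e4, if_neg e4]
            ring
  · have hdax : ∀ y : Fin n → ℚ, dot a y = y ⟨(i-1).toNat, by omega⟩ := by
      intro y
      rw [haeq, dot_evQ i (by omega) (by omega)]
    have hdaa : dot a a = 1 := by
      rw [hdax a, haeq, evQ_val i i (by omega) (by omega), if_pos rfl]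
    have hco : 2 * dot a x / dot a a = 2 * dot a x := by rw [hdaa]; field_simp
    rw [hco, hseq, swap1_apply i m, haeq, extQ_root3 i h1 h3 m, ← haeq, hdax x]
    by_cases e1 : m = i
    · rw [if_pos e1, if_pos e1, e1, extQ_negr2 x (by omega : (1:ℤ) ≤ i) h3,
        extQ_pos x (by omega : (1:ℤ) ≤ i) h3]
      ring
    · rw [if_neg e1, if_neg e1]
      by_cases e2 : m = -i
      · rw [if_pos e2, if_pos e2, e2, extQ_pos x (by omega : (1:ℤ) ≤ i) h3,
          extQ_negr2 x (by omega : (1:ℤ) ≤ i) h3]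
        ring
      · rw [if_neg e2, if_neg e2]
        ring


lemma val_sub {n : ℕ} (i j m : ℤ) (h1 : 1 ≤ m) (h2 : m ≤ (n:ℤ)) :
    (evQ n i - evQ n j) ⟨(m-1).toNat, by omega⟩
      = (if i = m then (1:ℚ) else 0) - (if j = m then 1 else 0) := by
  rw [Pi.sub_apply, evQ_val i m h1 h2, evQ_val j m h1 h2]

lemma val_add {n : ℕ} (i j m : ℤ) (h1 : 1 ≤ m) (h2 : m ≤ (n:ℤ)) :
    (evQ n i + evQ n j) ⟨(m-1).toNat, by omega⟩
      = (if i = m then (1:ℚ) else 0) + (if j = m then 1 else 0) := by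
  rw [Pi.add_apply, evQ_val i m h1 h2, evQ_val j m h1 h2]

/-- every root takes values in {0, 1, -1} -/
lemma root_vals {n : ℕ} {s : Equiv.Perm ℤ} {a : Fin n → ℚ} (hs : IsReflRootB n s a)
    (v : Fin n) : a v = 0 ∨ a v = 1 ∨ a v = -1 := by
  rcases hs with ⟨i, j, h1, h2, h3, -, haeq⟩ | ⟨i, j, h1, h2, h3, -, haeq⟩ |
    ⟨i, h1, h3, -, haeq⟩ <;> subst haeq <;>
    simp only [Pi.sub_apply, Pi.add_apply, evQ] <;> split_ifs <;> norm_num <;> omega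

/-- every root has a coordinate with value 1 -/
lemma root_coord_one {n : ℕ} {s : Equiv.Perm ℤ} {a : Fin n → ℚ} (hs : IsReflRootB n s a) :
    ∃ m : ℤ, ∃ h1 : 1 ≤ m, ∃ h2 : m ≤ (n:ℤ), a ⟨(m-1).toNat, by omega⟩ = 1 := by
  rcases hs with ⟨i, j, h1, h2, h3, -, haeq⟩ | ⟨i, j, h1, h2, h3, -, haeq⟩ |
    ⟨i, h1, h3, -, haeq⟩ <;> subst haeq <;> refine ⟨i, h1, by omega, ?_⟩
  · rw [val_sub i j i h1 (by omega), if_pos rfl, if_neg (by omega)]; norm_num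
  · rw [val_add i j i h1 (by omega), if_pos rfl, if_neg (by omega)]; norm_num
  · rw [evQ_val i i h1 (by omega), if_pos rfl]

lemma root_ne_zero {n : ℕ} {s : Equiv.Perm ℤ} {a : Fin n → ℚ} (hs : IsReflRootB n s a) :
    a ≠ 0 := by
  obtain ⟨m, h1, h2, hv⟩ := root_coord_one hs
  intro h0
  rw [h0, Pi.zero_apply] at hv
  norm_num at hv

lemma sum_evQ {n : ℕ} (i : ℤ) (h1 : 1 ≤ i) (h2 : i ≤ (n:ℤ)) :
    ∑ v, evQ n i v = 1 := by
  have key : ∀ k : Fin n, evQ n i k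
      = if k = (⟨(i-1).toNat, by omega⟩ : Fin n) then 1 else 0 := by
    intro k
    by_cases hk : k = (⟨(i-1).toNat, by omega⟩ : Fin n)
    · rw [if_pos hk, hk]
      unfold evQ
      rw [if_pos (by simp; omega)]
    · rw [if_neg hk]
      unfold evQ
      have hcne : ¬(((k:ℕ):ℤ) + 1 = i) := by
        intro hc
        apply hk
        rw [Fin.ext_iff]
        show (k:ℕ) = (i-1).toNat
        omega
      rw [if_neg hcne]
  rw [Finset.sum_congr rfl fun k _ => key k,
    Finset.sum_ite_eq' Finset.univ _ _, if_pos (Finset.mem_univ _)]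

/-- roots have nonneg coordinate sums, sums distinguishing type 1 -/
lemma root_sum_cases {n : ℕ} {s : Equiv.Perm ℤ} {a : Fin n → ℚ} (hs : IsReflRootB n s a) :
    (∑ v, a v) = 0 ∨ (∑ v, a v) = 1 ∨ (∑ v, a v) = 2 := by
  rcases hs with ⟨i, j, h1, h2, h3, -, haeq⟩ | ⟨i, j, h1, h2, h3, -, haeq⟩ |
    ⟨i, h1, h3, -, haeq⟩ <;> subst haeq
  · left
    have ei : ∑ v, evQ n i v = 1 := sum_evQ i h1 (by omega)
    have ej : ∑ v, evQ n j v = 1 := sum_evQ j (by omega) h3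
    simp only [Pi.sub_apply, Finset.sum_sub_distrib, ei, ej]
    ring
  · right; right
    have ei : ∑ v, evQ n i v = 1 := sum_evQ i h1 (by omega)
    have ej : ∑ v, evQ n j v = 1 := sum_evQ j (by omega) h3
    simp only [Pi.add_apply, Finset.sum_add_distrib, ei, ej]
    ring
  · right; left
    exact sum_evQ i h1 h3

lemma root_type1_of_sum_zero {n : ℕ} {s : Equiv.Perm ℤ} {a : Fin n → ℚ}
    (hs : IsReflRootB n s a) (h0 : (∑ v, a v) = 0) :
    ∃ i j : ℤ, 1 ≤ i ∧ i < j ∧ j ≤ (n : ℤ) ∧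
      s = Equiv.swap i j * Equiv.swap (-i) (-j) ∧ a = evQ n i - evQ n j := by
  rcases hs with hc | ⟨i, j, h1, h2, h3, -, haeq⟩ | ⟨i, h1, h3, -, haeq⟩
  · exact hc
  · exfalso
    subst haeq
    have ei : ∑ v, evQ n i v = 1 := sum_evQ i h1 (by omega)
    have ej : ∑ v, evQ n j v = 1 := sum_evQ j (by omega) h3
    rw [Finset.sum_congr rfl (fun v _ => Pi.add_apply _ _ v), Finset.sum_add_distrib,
      ei, ej] at h0
    norm_num at h0
  · exfalso
    subst haeq
    rw [sum_evQ i h1 h3] at h0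
    norm_num at h0

/-- equal roots implies equal reflections -/
lemma root_determines {n : ℕ} {s t : Equiv.Perm ℤ} {a : Fin n → ℚ}
    (hs : IsReflRootB n s a) (ht : IsReflRootB n t a) : s = t := by
  rcases hs with ⟨i, j, h1, h2, h3, hseq, haeq⟩ | ⟨i, j, h1, h2, h3, hseq, haeq⟩ |
    ⟨i, h1, h3, hseq, haeq⟩ <;>
    rcases ht with ⟨i', j', h1', h2', h3', hteq, hbeq⟩ | ⟨i', j', h1', h2', h3', hteq, hbeq⟩ |
      ⟨i', h1', h3', hteq, hbeq⟩ <;> rw [haeq] at hbeq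
  -- (1,1)
  · have Hi := congrFun hbeq ⟨(i-1).toNat, by omega⟩
    rw [val_sub i j i h1 (by omega), val_sub i' j' i h1 (by omega),
      if_pos rfl, if_neg (by omega)] at Hi
    have Hj := congrFun hbeq ⟨(j-1).toNat, by omega⟩
    rw [val_sub i j j (by omega) h3, val_sub i' j' j (by omega) h3,
      if_neg (by omega), if_pos rfl] at Hj
    have hii : i' = i := by
      by_contra hc
      rw [if_neg hc] at Hi
      split_ifs at Hi <;> first | omega | norm_num at Hi
    have hjj : j' = j := by
      by_contra hc
      rw [if_neg hc] at Hj
      split_ifs at Hj <;> first | omega | norm_num at Hj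
    rw [hseq, hteq, hii, hjj]
  -- (1,2)
  · exfalso
    have Hj := congrFun hbeq ⟨(j-1).toNat, by omega⟩
    rw [val_sub i j j (by omega) h3, val_add i' j' j (by omega) h3,
      if_neg (by omega), if_pos rfl] at Hj
    split_ifs at Hj <;> first | omega | norm_num at Hj
  -- (1,3)
  · exfalso
    have Hj := congrFun hbeq ⟨(j-1).toNat, by omega⟩
    rw [val_sub i j j (by omega) h3, evQ_val i' j (by omega) h3,
      if_neg (by omega), if_pos rfl] at Hj
    split_ifs at Hj <;> first | omega | norm_num at Hj
  -- (2,1)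
  · exfalso
    have Hj := congrFun hbeq ⟨(j'-1).toNat, by omega⟩
    rw [val_add i j j' (by omega) (by omega), val_sub i' j' j' (by omega) h3',
      if_neg (show ¬(i' = j') by omega), if_pos rfl] at Hj
    split_ifs at Hj <;> first | omega | norm_num at Hj
  -- (2,2)
  · have Hi := congrFun hbeq ⟨(i-1).toNat, by omega⟩
    rw [val_add i j i h1 (by omega), val_add i' j' i h1 (by omega),
      if_pos rfl, if_neg (by omega)] at Hi
    have Hj := congrFun hbeq ⟨(j-1).toNat, by omega⟩
    rw [val_add i j j (by omega) h3, val_add i' j' j (by omega) h3,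
      if_neg (by omega), if_pos rfl] at Hj
    have P1 : i' = i ∨ j' = i := by
      by_contra hc
      push_neg at hc
      rw [if_neg hc.1, if_neg hc.2] at Hi
      norm_num at Hi
    have P2 : i' = j ∨ j' = j := by
      by_contra hc
      push_neg at hc
      rw [if_neg hc.1, if_neg hc.2] at Hj
      norm_num at Hj
    have hii : i' = i := by omega
    have hjj : j' = j := by omega
    rw [hseq, hteq, hii, hjj]
  -- (2,3)
  · exfalso
    have Hi := congrFun hbeq ⟨(i-1).toNat, by omega⟩
    rw [val_add i j i h1 (by omega), evQ_val i' i h1 (by omega),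
      if_pos rfl, if_neg (by omega)] at Hi
    have Hj := congrFun hbeq ⟨(j-1).toNat, by omega⟩
    rw [val_add i j j (by omega) h3, evQ_val i' j (by omega) h3,
      if_neg (by omega), if_pos rfl] at Hj
    have e1 : i' = i := by
      by_contra hc; rw [if_neg hc] at Hi; norm_num at Hi
    have e2 : i' = j := by
      by_contra hc; rw [if_neg hc] at Hj; norm_num at Hj
    omega
  -- (3,1)
  · exfalso
    have Hj := congrFun hbeq ⟨(j'-1).toNat, by omega⟩
    rw [evQ_val i j' (by omega) h3', val_sub i' j' j' (by omega) h3',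
      if_neg (show ¬(i' = j') by omega), if_pos rfl] at Hj
    split_ifs at Hj <;> first | omega | norm_num at Hj
  -- (3,2)
  · exfalso
    have Hi := congrFun hbeq ⟨(i'-1).toNat, by omega⟩
    rw [evQ_val i i' h1' (by omega), val_add i' j' i' h1' (by omega),
      if_pos rfl, if_neg (show ¬(j' = i') by omega)] at Hi
    have Hj := congrFun hbeq ⟨(j'-1).toNat, by omega⟩
    rw [evQ_val i j' (by omega) h3', val_add i' j' j' (by omega) h3',
      if_neg (show ¬(i' = j') by omega), if_pos rfl] at Hj
    have e1 : i = i' := by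
      by_contra hc; rw [if_neg hc] at Hi; norm_num at Hi
    have e2 : i = j' := by
      by_contra hc; rw [if_neg hc] at Hj; norm_num at Hj
    omega
  -- (3,3)
  · have Hi := congrFun hbeq ⟨(i-1).toNat, by omega⟩
    rw [evQ_val i i h1 (by omega), evQ_val i' i h1 (by omega), if_pos rfl] at Hi
    have hii : i' = i := by
      by_contra hc; rw [if_neg hc] at Hi; norm_num at Hi
    rw [hseq, hteq, hii]

/-- distinct reflections have non-proportional roots -/
lemma roots_not_proportional {n : ℕ} {s t : Equiv.Perm ℤ} {a b : Fin n → ℚ}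
    (hs : IsReflRootB n s a) (ht : IsReflRootB n t b) (hst : s ≠ t) (κ : ℚ) :
    b ≠ κ • a := by
  intro hb
  obtain ⟨m, hm1, hm2, hbm⟩ := root_coord_one ht
  have hκa : (1:ℚ) = κ * a ⟨(m-1).toNat, by omega⟩ := by
    rw [← hbm, hb, Pi.smul_apply, smul_eq_mul]
  rcases root_vals hs ⟨(m-1).toNat, by omega⟩ with hv | hv | hv
  · rw [hv] at hκa; norm_num at hκa
  · -- κ = 1, so b = a
    have hκ : κ = 1 := by rw [hv] at hκa; linarith
    rw [hκ, one_smul] at hb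
    rw [hb] at ht
    exact hst (root_determines hs ht)
  · -- κ = -1, so b = -a
    have hκ : κ = -1 := by rw [hv] at hκa; linarith
    rw [hκ] at hb
    have hsum : (∑ v, b v) = -(∑ v, a v) := by
      rw [hb]
      simp [Finset.sum_neg_distrib]
    have hsa := root_sum_cases hs
    have hsb := root_sum_cases ht
    have h0a : (∑ v, a v) = 0 := by rcases hsa with h|h|h <;> rcases hsb with h'|h'|h' <;> linarith
    have h0b : (∑ v, b v) = 0 := by linarith
    obtain ⟨i, j, h1, h2, h3, hseq, haeq⟩ := root_type1_of_sum_zero hs h0a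
    obtain ⟨i', j', h1', h2', h3', hteq, hbeq⟩ := root_type1_of_sum_zero ht h0b
    rw [haeq, hbeq] at hb
    -- hb : evQ i' - evQ j' = -1 • (evQ i - evQ j)
    have Hi := congrFun hb ⟨(i-1).toNat, by omega⟩
    rw [val_sub i' j' i h1 (by omega), Pi.smul_apply, val_sub i j i h1 (by omega),
      if_pos rfl, if_neg (show ¬(j = i) by omega)] at Hi
    have Hi' := congrFun hb ⟨(i'-1).toNat, by omega⟩
    rw [val_sub i' j' i' h1' (by omega), Pi.smul_apply, val_sub i j i' h1' (by omega),
      if_pos rfl, if_neg (show ¬(j' = i') by omega)] at Hi'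
    have e1 : j' = i := by
      by_contra hc
      rw [if_neg hc] at Hi
      split_ifs at Hi <;> first | omega | norm_num at Hi
    have e2 : j = i' := by
      by_contra hc
      rw [if_neg hc] at Hi'
      split_ifs at Hi' <;> first | omega | norm_num at Hi'
    omega


/-- the factor ⦅n-k-1, n-k⦆ of the Coxeter element -/
def wkB (n k : ℕ) : Equiv.Perm ℤ :=
  Equiv.swap ((n:ℤ)-k-1) ((n:ℤ)-k) * Equiv.swap (-((n:ℤ)-k-1)) (-((n:ℤ)-k))

/-- reflection list whose product is the Coxeter element -/
def clB (n : ℕ) : ℕ → List (Equiv.Perm ℤ)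
  | 0 => [Equiv.swap (n:ℤ) (-(n:ℤ))]
  | (k+1) => wkB n k :: clB n k

lemma clB_length (n : ℕ) : ∀ k, (clB n k).length = k + 1 := by
  intro k
  induction k with
  | zero => rfl
  | succ k ih => simp [clB, ih]

lemma clB_mem (n : ℕ) : ∀ k, k < n → ∀ r ∈ clB n k, r ∈ reflB n := by
  intro k
  induction k with
  | zero =>
    intro hk r hr
    simp only [clB, List.mem_singleton] at hr
    exact Or.inr ⟨(n:ℤ), by exact_mod_cast hk, le_refl _, hr⟩
  | succ k ih =>
    intro hk r hr
    rcases List.mem_cons.1 hr with h | h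
    · refine Or.inl ⟨(n:ℤ)-k-1, (n:ℤ)-k, by omega, ?_, ?_, h⟩
      · rw [abs_of_pos (by omega)]; omega
      · rw [abs_of_pos (by omega)]; omega
    · exact ih (by omega) r h

lemma clB_prod (n : ℕ) : ∀ k, k < n → ∀ j : ℤ, (clB n k).prod j =
    if ((n:ℤ)-k ≤ j ∧ j ≤ (n:ℤ)-1) then j+1
    else if j = (n:ℤ) then -((n:ℤ)-k)
    else if (-((n:ℤ)-1) ≤ j ∧ j ≤ -((n:ℤ)-k)) then j-1
    else if j = -(n:ℤ) then (n:ℤ)-k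
    else j := by
  intro k
  induction k with
  | zero =>
    intro hk j
    have h1 : (1:ℤ) ≤ (n:ℤ) := by exact_mod_cast hk
    simp only [clB, List.prod_singleton, Equiv.swap_apply_def]
    push_cast
    split_ifs <;> omega
  | succ k ih =>
    intro hk j
    have hkn : k < n := by omega
    show (wkB n k * (clB n k).prod) j = _
    rw [Equiv.Perm.mul_apply, ih hkn j, wkB,
      swap2_apply ((n:ℤ)-k-1) ((n:ℤ)-k) _ (by omega) (by omega) (by omega) (by omega)]
    push_cast
    split_ifs <;> omega

/-- absLength upper bound from an explicit list -/
lemma absLength_le {G : Type*} [Group G] (T : Set G) (w : G) (l : List G)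
    (hl : ∀ x ∈ l, x ∈ T) (hp : l.prod = w) : absLength T w ≤ l.length :=
  Nat.sInf_le ⟨l, rfl, hl, hp⟩

/-- a minimal-length factorization exists whenever some factorization exists -/
lemma absLength_witness {G : Type*} [Group G] (T : Set G) (w : G) (l : List G)
    (hl : ∀ x ∈ l, x ∈ T) (hp : l.prod = w) :
    ∃ l' : List G, l'.length = absLength T w ∧ (∀ x ∈ l', x ∈ T) ∧ l'.prod = w :=
  Nat.sInf_mem (⟨l.length, l, rfl, hl, hp⟩ :
    Set.Nonempty {k : ℕ | ∃ l : List G, l.length = k ∧ (∀ t ∈ l, t ∈ T) ∧ l.prod = w})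


/-- dot product with `d` as a linear map -/
def dotL {n : ℕ} (d : Fin n → ℚ) : (Fin n → ℚ) →ₗ[ℚ] ℚ where
  toFun x := dot d x
  map_add' x y := by
    simp only [dot, Pi.add_apply, mul_add]
    rw [Finset.sum_add_distrib]
  map_smul' c x := by
    simp only [dot, Pi.smul_apply, smul_eq_mul, RingHom.id_apply]
    rw [Finset.mul_sum]
    exact Finset.sum_congr rfl fun k _ => by ring

lemma finrank_ker_dotL {n : ℕ} (d : Fin n → ℚ) :
    (n : ℕ) - 1 ≤ Module.finrank ℚ (LinearMap.ker (dotL d)) := by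
  have h := LinearMap.finrank_range_add_finrank_ker (dotL d)
  have hV : Module.finrank ℚ (Fin n → ℚ) = n := by
    simp [Module.finrank_pi]
  have hr : Module.finrank ℚ (LinearMap.range (dotL d)) ≤ 1 := by
    have := Submodule.finrank_le (LinearMap.range (dotL d))
    simpa using this
  omega

/-- subspace of codimension ≤ length fixed by the product of a reflection list -/
lemma exists_subspace {n : ℕ} (l : List (Equiv.Perm ℤ)) (hl : ∀ r ∈ l, r ∈ reflB n) :
    ∃ S : Submodule ℚ (Fin n → ℚ), (n - l.length ≤ Module.finrank ℚ S) ∧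
      ∀ x ∈ S, ∀ m : ℤ, extQ n x (l.prod m) = extQ n x m := by
  induction l with
  | nil =>
    refine ⟨⊤, ?_, ?_⟩
    · rw [finrank_top]
      simp [Module.finrank_pi]
    · intro x _ m
      rw [List.prod_nil, Equiv.Perm.one_apply]
  | cons r l ih =>
    obtain ⟨S', hS'rank, hS'fix⟩ := ih (fun w hw => hl w (List.mem_cons_of_mem r hw))
    obtain ⟨d, hd⟩ := reflB_has_root (hl r List.mem_cons_self)
    refine ⟨S' ⊓ LinearMap.ker (dotL d), ?_, ?_⟩
    · have hsum := Submodule.finrank_sup_add_finrank_inf_eq S' (LinearMap.ker (dotL d))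
      have h1 := finrank_ker_dotL d
      have h2 : Module.finrank ℚ ↥(S' ⊔ LinearMap.ker (dotL d)) ≤ n := by
        have := Submodule.finrank_le (S' ⊔ LinearMap.ker (dotL d))
        simpa [Module.finrank_pi] using this
      have hlen : (r :: l).length = l.length + 1 := rfl
      omega
    · intro x hx m
      have hxS' : x ∈ S' := hx.1
      have hxd : dot d x = 0 := hx.2
      rw [List.prod_cons, Equiv.Perm.mul_apply, act hd x (l.prod m), hxd]
      rw [hS'fix x hxS' m]
      ring

/-- the linear map x ↦ ρ(c)⁻¹ x, given explicitly -/
def CmapE (n : ℕ) (y : Fin n → ℚ) : Fin n → ℚ := fun k =>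
  if h : (k : ℕ) + 1 < n then y ⟨(k : ℕ) + 1, h⟩
  else -y ⟨0, lt_of_le_of_lt (Nat.zero_le _) k.isLt⟩

/-- the linear map x ↦ ρ(c) x, given explicitly -/
def DmapE (n : ℕ) (x : Fin n → ℚ) : Fin n → ℚ := fun k =>
  if (k : ℕ) = 0 then -x ⟨n - 1, by have := k.isLt; omega⟩
  else x ⟨(k : ℕ) - 1, by have := k.isLt; omega⟩

lemma DmapE_CmapE {n : ℕ} (y : Fin n → ℚ) : DmapE n (CmapE n y) = y := by
  funext k
  unfold DmapE CmapE
  have hkn := k.isLt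
  by_cases hk : (k : ℕ) = 0
  · rw [if_pos hk]
    rw [dif_neg (show ¬((⟨n-1, by omega⟩ : Fin n) : ℕ) + 1 < n by show ¬(n-1+1 < n); omega)]
    rw [neg_neg]
    congr 1
    exact Fin.ext (by simp; omega)
  · rw [if_neg hk,
      dif_pos (show ((⟨(k:ℕ)-1, by omega⟩ : Fin n) : ℕ) + 1 < n by show (k:ℕ)-1+1 < n; omega)]
    congr 1
    exact Fin.ext (by simp; omega)

lemma DmapE_sub {n : ℕ} (x y : Fin n → ℚ) : DmapE n (x - y) = DmapE n x - DmapE n y := by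
  funext k
  unfold DmapE
  by_cases hk : (k : ℕ) = 0
  · simp only [hk, if_pos, Pi.sub_apply, if_true]
    ring
  · simp only [hk, Pi.sub_apply, if_false, if_neg hk]

def CmapL (n : ℕ) : (Fin n → ℚ) →ₗ[ℚ] (Fin n → ℚ) where
  toFun := CmapE n
  map_add' x y := by
    funext k
    unfold CmapE
    by_cases h : (k : ℕ) + 1 < n <;> simp [h] <;> ring
  map_smul' c x := by
    funext k
    unfold CmapE
    by_cases h : (k : ℕ) + 1 < n <;> simp [h]

def phiL (n : ℕ) : (Fin n → ℚ) →ₗ[ℚ] (Fin n → ℚ) := CmapL n - LinearMap.id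

lemma phiL_apply {n : ℕ} (x : Fin n → ℚ) : phiL n x = CmapE n x - x := rfl

lemma phiL_injective (n : ℕ) : Function.Injective (phiL n) := by
  rw [← LinearMap.ker_eq_bot]
  rw [Submodule.eq_bot_iff]
  intro x hx
  rw [LinearMap.mem_ker, phiL_apply, sub_eq_zero] at hx
  -- CmapE n x = x
  have hfix : ∀ k : Fin n, CmapE n x k = x k := fun k => by rw [hx]
  rcases Nat.eq_zero_or_pos n with hn0 | hn
  · subst hn0
    funext k
    exact k.elim0
  have claim : ∀ m : ℕ, (h : m < n) → x ⟨m, h⟩ = x ⟨0, hn⟩ := by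
    intro m
    induction m with
    | zero => intro h; rfl
    | succ m ihm =>
      intro h
      have hm : m < n := by omega
      have step : x ⟨m + 1, h⟩ = x ⟨m, hm⟩ := by
        have hh := hfix ⟨m, hm⟩
        unfold CmapE at hh
        rw [dif_pos (show ((⟨m, hm⟩ : Fin n) : ℕ) + 1 < n from h)] at hh
        exact hh
      rw [step]
      exact ihm hm
  have hlast := hfix ⟨n - 1, by omega⟩
  unfold CmapE at hlast
  rw [dif_neg (show ¬((⟨n-1, by omega⟩ : Fin n) : ℕ) + 1 < n by
    show ¬(n-1+1 < n); omega)] at hlast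
  have h1 : x ⟨n-1, by omega⟩ = x ⟨0, hn⟩ := claim (n-1) (by omega)
  have hfin : -x ⟨0, hn⟩ = x ⟨0, hn⟩ := hlast.trans h1
  have h0 : x ⟨0, hn⟩ = 0 := by linarith
  funext k
  have hc := claim (k : ℕ) k.isLt
  simp only [Fin.eta] at hc
  rw [hc, h0, Pi.zero_apply]

lemma phiL_surjective (n : ℕ) : Function.Surjective (phiL n) :=
  LinearMap.injective_iff_surjective.1 (phiL_injective n)



def natify {n : ℕ} (u : Fin n → ℚ) : ℕ → ℚ := fun m => if h : m < n then u ⟨m, h⟩ else 0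

lemma natify_fin {n : ℕ} (u : Fin n → ℚ) (i : Fin n) : natify u (i : ℕ) = u i := by
  unfold natify
  rw [dif_pos i.isLt]

lemma natify_lt {n : ℕ} (u : Fin n → ℚ) {m : ℕ} (h : m < n) : natify u m = u ⟨m, h⟩ := by
  unfold natify
  rw [dif_pos h]

lemma keyNat (N : ℕ) (f : ℕ → ℚ) (J : ℕ) (hJ : J ≤ N) :
    ∑ m ∈ Finset.range (N+1),
        ((if m ≤ J then (1:ℚ) else -1) * (if m = 0 then -(f N) else f (m-1)))
      = (∑ m ∈ Finset.range (N+1), (if m ≤ J then (1:ℚ) else -1) * f m) - 2 * f J := by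
  rw [Finset.sum_range_succ' _ N, Finset.sum_range_succ _ N]
  have e0 : ((if (0:ℕ) ≤ J then (1:ℚ) else -1) * (if (0:ℕ) = 0 then -(f N) else f 0)) = -f N := by
    rw [if_pos (Nat.zero_le _), if_pos rfl]
    ring
  rw [e0]
  have hsplit : ∀ x ∈ Finset.range N,
      ((if x + 1 ≤ J then (1:ℚ) else -1) * (if x + 1 = 0 then -(f N) else f (x+1-1)))
        = (if x ≤ J then (1:ℚ) else -1) * f x - (if x = J then 2 * f x else 0) := by
    intro x hx
    rw [if_neg (Nat.succ_ne_zero x), Nat.add_sub_cancel]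
    split_ifs <;> first | (exfalso; omega) | ring
  rw [Finset.sum_congr rfl hsplit, Finset.sum_sub_distrib]
  rcases eq_or_lt_of_le hJ with hJN | hJN
  · subst hJN
    have hz : ∑ x ∈ Finset.range J, (if x = J then 2 * f x else 0) = 0 :=
      Finset.sum_eq_zero (fun x hx => if_neg (Nat.ne_of_lt (Finset.mem_range.1 hx)))
    rw [hz, if_pos (le_refl J)]
    ring
  · rw [Finset.sum_ite_eq' (Finset.range N) J (fun x => 2 * f x),
      if_pos (Finset.mem_range.2 hJN), if_neg (by omega)]
    ring

/-- the key bilinear identity -/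
lemma bB_key {n : ℕ} (hn : 0 < n) (u y : Fin n → ℚ) :
    bB n (u - DmapE n u) y = 2 * dot y u := by
  unfold bB
  rw [Finset.sum_comm]
  have step1 : ∀ j : Fin n,
      (∑ i : Fin n, if i ≤ j then (u - DmapE n u) i * y j else -((u - DmapE n u) i * y j))
        = (2 * u j) * y j := by
    intro j
    have e1 : ∀ i : Fin n, (if i ≤ j then (u - DmapE n u) i * y j else -((u - DmapE n u) i * y j))
        = ((if (i:ℕ) ≤ (j:ℕ) then (1:ℚ) else -1) * (u i - DmapE n u i)) * y j := by
      intro i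
      by_cases h : i ≤ j
      · rw [if_pos h, if_pos (Fin.le_def.mp h), Pi.sub_apply]
        ring
      · rw [if_neg h, if_neg (fun hc => h (Fin.le_def.mpr hc)), Pi.sub_apply]
        ring
    rw [Finset.sum_congr rfl (fun i _ => e1 i), ← Finset.sum_mul]
    have claim2 : (∑ i : Fin n, (if (i:ℕ) ≤ (j:ℕ) then (1:ℚ) else -1) * (u i - DmapE n u i))
        = 2 * u j := by
      have expand : ∀ i : Fin n, (if (i:ℕ) ≤ (j:ℕ) then (1:ℚ) else -1) * (u i - DmapE n u i)
          = ((if (i:ℕ) ≤ (j:ℕ) then (1:ℚ) else -1) * natify u (i:ℕ))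
            - ((if (i:ℕ) ≤ (j:ℕ) then (1:ℚ) else -1)
                * (if (i:ℕ) = 0 then -(natify u (n-1)) else natify u ((i:ℕ)-1))) := by
        intro i
        have hfi : natify u (i:ℕ) = u i := natify_fin u i
        have hDi : DmapE n u i
            = (if (i:ℕ) = 0 then -(natify u (n-1)) else natify u ((i:ℕ)-1)) := by
          unfold DmapE
          by_cases hi0 : (i:ℕ) = 0
          · rw [if_pos hi0, if_pos hi0, natify_lt u (by omega : n - 1 < n)]
          · rw [if_neg hi0, if_neg hi0, natify_lt u (by have := i.isLt; omega : (i:ℕ) - 1 < n)]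
        rw [← hfi, hDi]
        ring
      rw [Finset.sum_congr rfl (fun i _ => expand i), Finset.sum_sub_distrib]
      have c1 : (∑ i : Fin n, (if (i:ℕ) ≤ (j:ℕ) then (1:ℚ) else -1) * natify u (i:ℕ))
          = ∑ m ∈ Finset.range n, (if m ≤ (j:ℕ) then (1:ℚ) else -1) * natify u m :=
        Fin.sum_univ_eq_sum_range (fun m => (if m ≤ (j:ℕ) then (1:ℚ) else -1) * natify u m) n
      have c2 : (∑ i : Fin n, (if (i:ℕ) ≤ (j:ℕ) then (1:ℚ) else -1)
            * (if (i:ℕ) = 0 then -(natify u (n-1)) else natify u ((i:ℕ)-1)))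
          = ∑ m ∈ Finset.range n,
              (if m ≤ (j:ℕ) then (1:ℚ) else -1)
                * (if m = 0 then -(natify u (n-1)) else natify u (m-1)) :=
        Fin.sum_univ_eq_sum_range
          (fun m => (if m ≤ (j:ℕ) then (1:ℚ) else -1)
            * (if m = 0 then -(natify u (n-1)) else natify u (m-1))) n
      rw [c1, c2]
      have hkey := keyNat (n-1) (natify u) (j:ℕ) (by have := j.isLt; omega)
      rw [(by omega : n - 1 + 1 = n)] at hkey
      rw [hkey, natify_fin u j]
      ring
    rw [claim2]
  rw [Finset.sum_congr rfl (fun j _ => step1 j)]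
  unfold dot
  rw [Finset.mul_sum]
  exact Finset.sum_congr rfl (fun j _ => by ring)


lemma dot_sub_right {n : ℕ} (x y z : Fin n → ℚ) : dot x (y - z) = dot x y - dot x z := by
  unfold dot
  simp only [Pi.sub_apply, mul_sub]
  rw [Finset.sum_sub_distrib]

lemma dot_smul_right {n : ℕ} (c : ℚ) (x y : Fin n → ℚ) : dot x (c • y) = c * dot x y := by
  unfold dot
  rw [Finset.mul_sum]
  exact Finset.sum_congr rfl fun k _ => by simp; ring

/-- functionals vanishing on a hyperplane are proportional -/
lemma prop_of_ker_le {n : ℕ} {d a : Fin n → ℚ} (hd : d ≠ 0)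
    (h : ∀ x, dot d x = 0 → dot a x = 0) : ∃ κ : ℚ, a = κ • d := by
  have hdd : dot d d ≠ 0 := dot_self_ne_zero hd
  refine ⟨dot a d / dot d d, ?_⟩
  funext k
  have hkey : dot d ((fun m => if m = k then 1 else 0) - (d k / dot d d) • d) = 0 := by
    rw [dot_sub_right, dot_smul_right, dot_indicator]
    field_simp
    ring
  have := h _ hkey
  rw [dot_sub_right, dot_smul_right, dot_indicator, sub_eq_zero] at this
  rw [Pi.smul_apply, smul_eq_mul]
  rw [this]
  ring


end BnAux

open BnAux in
/-- If `s` and `t` are distinct reflections in `T(Bₙ)` with `s * t ≤ c` in the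
absolute order, where `c = [1 2 … n]` is the Coxeter element, then
`b_B(α_s, α_t) = 0`. -/
theorem bB_vanishes_on_subordinate_roots (n : ℕ) (hn : 2 ≤ n) (c : Equiv.Perm ℤ)
    (hc1 : ∀ i : ℤ, 1 ≤ i → i ≤ (n : ℤ) - 1 → c i = i + 1)
    (hc2 : c (n : ℤ) = -1)
    (hc3 : ∀ i : ℤ, c (-i) = -(c i))
    (hc4 : ∀ i : ℤ, (n : ℤ) < |i| → c i = i)
    (s t : Equiv.Perm ℤ) (a b : Fin n → ℚ)
    (hs : IsReflRootB n s a) (ht : IsReflRootB n t b) (hst : s ≠ t)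
    (h : absLe (reflB n) (s * t) c) :
    bB n a b = 0 := by
  classical
  have hs_mem : s ∈ reflB n := refl_mem hs
  have ht_mem : t ∈ reflB n := refl_mem ht
  have hss : s * s = 1 := refl_sq hs
  have htt : t * t = 1 := refl_sq ht
  have hsinv : s⁻¹ = s := inv_eq_of_mul_eq_one_right hss
  have htinv : t⁻¹ = t := inv_eq_of_mul_eq_one_right htt
  -- c as a product of n reflections
  have hclen : (clB n (n-1)).length = n := by rw [clB_length]; omega
  have hcmem : ∀ r ∈ clB n (n-1), r ∈ reflB n := clB_mem n (n-1) (by omega)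
  have hc0 : c 0 = 0 := by
    have h := hc3 0
    rw [neg_zero] at h
    omega
  have hcprod : (clB n (n-1)).prod = c := by
    ext j
    rw [clB_prod n (n-1) (by omega) j]
    have hcast : ((n - 1 : ℕ) : ℤ) = (n : ℤ) - 1 := by omega
    rw [hcast]
    by_cases h1 : 1 ≤ j ∧ j ≤ (n:ℤ)-1
    · rw [if_pos (by constructor <;> omega), hc1 j h1.1 h1.2]
    · rw [if_neg (by omega)]
      by_cases h2 : j = (n:ℤ)
      · rw [if_pos h2, h2, hc2]
        omega
      · rw [if_neg h2]
        by_cases h3 : (-((n:ℤ)-1) ≤ j ∧ j ≤ -((n:ℤ) - ((n:ℤ)-1)))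
        · rw [if_pos h3]
          have hj : c j = j - 1 := by
            have he := hc3 (-j)
            rw [neg_neg] at he
            rw [he, hc1 (-j) (by omega) (by omega)]
            ring
          rw [hj]
        · rw [if_neg h3]
          by_cases h4 : j = -(n:ℤ)
          · rw [if_pos h4, h4]
            have he := hc3 (n:ℤ)
            rw [he, hc2]
            omega
          · rw [if_neg h4]
            rcases (by omega : j = 0 ∨ (n:ℤ) < j ∨ j < -(n:ℤ)) with hj | hj | hj
            · rw [hj, hc0]
            · rw [hc4 j (by rw [abs_of_pos (by omega)]; omega)]
            · rw [hc4 j (by rw [abs_of_neg (by omega)]; omega)]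
  have habs_c : absLength (reflB n) c ≤ n := by
    have := absLength_le (reflB n) c _ hcmem hcprod
    rwa [hclen] at this
  -- the element g
  set g := (s * t)⁻¹ * c with hg
  have hginv : g = t * (s * c) := by
    rw [hg, mul_inv_rev, hsinv, htinv, mul_assoc]
  -- a factorization of g
  have hgwit := absLength_witness (reflB n) g (t :: s :: clB n (n-1))
    (by
      intro x hx
      rcases List.mem_cons.1 hx with hx | hx
      · rw [hx]; exact ht_mem
      rcases List.mem_cons.1 hx with hx | hx
      · rw [hx]; exact hs_mem
      · exact hcmem x hx)
    (by rw [List.prod_cons, List.prod_cons, hcprod, hginv])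
  -- lower bound ℓ(st) ≥ 2
  have hstwit := absLength_witness (reflB n) (s * t) [s, t]
    (by
      intro x hx
      rcases List.mem_cons.1 hx with hx | hx
      · rw [hx]; exact hs_mem
      rcases List.mem_cons.1 hx with hx | hx
      · rw [hx]; exact ht_mem
      · exact absurd hx List.not_mem_nil)
    (by rw [List.prod_cons, List.prod_singleton])
  have hst2 : 2 ≤ absLength (reflB n) (s * t) := by
    by_contra hlt
    push_neg at hlt
    obtain ⟨l', hlen, hmem, hprod⟩ := hstwit
    rcases l' with _ | ⟨r, l''⟩
    · -- empty: s * t = 1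
      rw [List.prod_nil] at hprod
      apply hst
      have hts : s = t⁻¹ := mul_eq_one_iff_eq_inv.1 hprod.symm
      rw [hts, htinv]
    rcases l'' with _ | ⟨r2, rest⟩
    swap
    · -- length ≥ 2 contradicts < 2
      simp only [List.length_cons] at hlen
      omega
    -- singleton: s * t = r is a reflection
    rw [List.prod_singleton] at hprod
    obtain ⟨d, hd⟩ := reflB_has_root (hmem r (List.mem_singleton_self r))
    have hdne : d ≠ 0 := root_ne_zero hd
    have hane : a ≠ 0 := root_ne_zero hs
    have hbne : b ≠ 0 := root_ne_zero ht
    have haa : dot a a ≠ 0 := dot_self_ne_zero hane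
    have hbb : dot b b ≠ 0 := dot_self_ne_zero hbne
    -- vector equation for x ⊥ d
    have hvec : ∀ x : Fin n → ℚ, dot d x = 0 →
        (2 * dot a x / dot a a) • a
          + (2 * dot b x / dot b b - (2 * dot a x / dot a a) * (2 * dot b a / dot b b)) • b
          = 0 := by
      intro x hx
      funext k
      have hm := congrArg (fun w : Equiv.Perm ℤ => extQ n x (w (((k:ℕ):ℤ)+1))) hprod.symm
      rw [act hd x _, hx] at hm
      rw [Equiv.Perm.mul_apply, act hs x _, act ht x _, act ht a _] at hm
      rw [extQ_coord x k, extQ_coord a k, extQ_coord b k] at hm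
      simp only [Pi.add_apply, Pi.smul_apply, smul_eq_mul, Pi.zero_apply]
      first
      | linear_combination -hm
      | linear_combination hm
    have hax0 : ∀ x : Fin n → ℚ, dot d x = 0 → dot a x = 0 := by
      intro x hx
      by_contra hax
      have hv := hvec x hx
      have hcoef : (2 * dot a x / dot a a) ≠ 0 := by
        intro hc
        apply hax
        rcases div_eq_zero_iff.1 hc with h2 | h2
        · linarith
        · exact absurd h2 haa
      have hba : a = -((2 * dot a x / dot a a)⁻¹
          * (2 * dot b x / dot b b - (2 * dot a x / dot a a) * (2 * dot b a / dot b b))) • b := by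
        funext k
        have hvk := congrFun hv k
        simp only [Pi.add_apply, Pi.smul_apply, smul_eq_mul, Pi.zero_apply] at hvk
        simp only [Pi.smul_apply, smul_eq_mul]
        have h3 : (2 * dot a x / dot a a) * a k
            = -((2 * dot b x / dot b b - (2 * dot a x / dot a a) * (2 * dot b a / dot b b)) * b k) := by
          linarith [hvk]
        calc a k = (2 * dot a x / dot a a)⁻¹ * ((2 * dot a x / dot a a) * a k) := by
              rw [inv_mul_cancel_left₀ hcoef]
          _ = -((2 * dot a x / dot a a)⁻¹
              * (2 * dot b x / dot b b - (2 * dot a x / dot a a) * (2 * dot b a / dot b b))) * b k := by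
              rw [h3]; ring
      exact roots_not_proportional ht hs (Ne.symm hst) _ hba
    have hbx0 : ∀ x : Fin n → ℚ, dot d x = 0 → dot b x = 0 := by
      intro x hx
      have hv := hvec x hx
      rw [hax0 x hx] at hv
      simp only [mul_zero, zero_mul, zero_div, zero_smul, zero_add, mul_zero, sub_zero] at hv
      by_contra hbx
      have hcoef : (2 * dot b x / dot b b) ≠ 0 := by
        intro hc
        apply hbx
        rcases div_eq_zero_iff.1 hc with h2 | h2
        · linarith
        · exact absurd h2 hbb
      apply hbne
      funext k
      have := congrFun hv k
      simp only [Pi.smul_apply, smul_eq_mul, Pi.zero_apply] at this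
      rcases mul_eq_zero.1 this with hc | hc
      · exact absurd hc hcoef
      · simpa using hc
    obtain ⟨κ₁, hκ₁⟩ := prop_of_ker_le hdne hax0
    obtain ⟨κ₂, hκ₂⟩ := prop_of_ker_le hdne hbx0
    have hκ₁ne : κ₁ ≠ 0 := by
      intro hz
      apply hane
      rw [hκ₁, hz, zero_smul]
    apply roots_not_proportional hs ht hst (κ₂ * κ₁⁻¹)
    rw [hκ₂, hκ₁, smul_smul]
    congr 1
    field_simp
  -- ℓ(g) ≤ n - 2 and the fixed subspace
  obtain ⟨lg, hlglen, hlgmem, hlgprod⟩ := hgwit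
  have hgshort : lg.length ≤ n - 2 := by
    have heq : absLength (reflB n) c
        = absLength (reflB n) (s * t) + absLength (reflB n) g := h
    omega
  obtain ⟨S, hSrank, hSfix⟩ := exists_subspace lg hlgmem
  have hSr2 : 2 ≤ Module.finrank ℚ S := by omega
  have hfixg : ∀ x ∈ S, ∀ m : ℤ, extQ n x (g m) = extQ n x m := by
    intro x hx m
    rw [← hlgprod]
    exact hSfix x hx m
  have haa : dot a a ≠ 0 := dot_self_ne_zero (root_ne_zero hs)
  have hbb : dot b b ≠ 0 := dot_self_ne_zero (root_ne_zero ht)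
  -- CmapE via c
  have hCof : ∀ (y : Fin n → ℚ) (k : Fin n),
      extQ n y (c (((k:ℕ):ℤ)+1)) = CmapE n y k := by
    intro y k
    by_cases hk : (k:ℕ) + 1 < n
    · rw [hc1 _ (by omega) (by omega), extQ_pos y (by omega) (by omega)]
      unfold CmapE
      rw [dif_pos hk]
      exact congrArg y (Fin.ext (by show ((((k:ℕ):ℤ)+1)+1-1).toNat = (k:ℕ)+1; omega))
    · have hkn : ((k:ℕ):ℤ) + 1 = (n:ℤ) := by
        have := k.isLt
        omega
      rw [hkn, hc2, extQ_negr2 y (by norm_num) (by omega : (1:ℤ) ≤ (n:ℤ))]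
      unfold CmapE
      rw [dif_neg hk]
      exact congrArg (fun z => -y z) (Fin.ext (by show ((1:ℤ)-1).toNat = 0; omega))
  -- expansion of the fixed-point condition
  have hfix_expand : ∀ x : Fin n → ℚ, (∀ m : ℤ, extQ n x (g m) = extQ n x m) →
      CmapE n x - x
        = (2 * dot a x / dot a a - (2 * dot b x / dot b b) * (2 * dot a b / dot a a)) •
            CmapE n a + (2 * dot b x / dot b b) • CmapE n b := by
    intro x hx
    funext k
    have hm := hx (((k:ℕ):ℤ)+1)
    rw [hginv, Equiv.Perm.mul_apply, Equiv.Perm.mul_apply,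
      act ht x _, act hs x _, act hs b _] at hm
    rw [extQ_coord x k, hCof x k, hCof a k, hCof b k] at hm
    simp only [Pi.add_apply, Pi.smul_apply, smul_eq_mul, Pi.sub_apply]
    first
    | linear_combination hm
    | linear_combination -hm
  -- preimages of CmapE a and CmapE b under phiL
  obtain ⟨u, hu⟩ := phiL_surjective n (CmapE n a)
  obtain ⟨v, hv⟩ := phiL_surjective n (CmapE n b)
  -- S is contained in span {u, v}
  have hsub : S ≤ Submodule.span ℚ {u, v} := by
    intro x hx
    have hx2 := hfix_expand x (hfixg x hx)
    have hphi : phiL n x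
        = phiL n ((2 * dot a x / dot a a - (2 * dot b x / dot b b) * (2 * dot a b / dot a a)) • u
            + (2 * dot b x / dot b b) • v) := by
      rw [map_add, map_smul, map_smul, hu, hv, phiL_apply, hx2]
    have hxe := phiL_injective n hphi
    rw [hxe]
    refine Submodule.add_mem _ (Submodule.smul_mem _ _ ?_) (Submodule.smul_mem _ _ ?_)
    · exact Submodule.subset_span (Set.mem_insert u {v})
    · exact Submodule.subset_span (Set.mem_insert_of_mem u rfl)
  have hPrank : Module.finrank ℚ (Submodule.span ℚ ({u, v} : Set (Fin n → ℚ))) ≤ 2 := by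
    have h2 := finrank_span_le_card (R := ℚ) ({u, v} : Set (Fin n → ℚ))
    have hcard : ({u, v} : Set (Fin n → ℚ)).toFinset.card ≤ 2 := by
      rw [Set.toFinset_insert, Set.toFinset_singleton]
      exact (Finset.card_insert_le u {v}).trans (by simp)
    omega
  have hSP : S = Submodule.span ℚ {u, v} :=
    Submodule.eq_of_le_of_finrank_le hsub (le_trans hPrank hSr2)
  have huS : u ∈ S := by
    rw [hSP]
    exact Submodule.subset_span (Set.mem_insert u {v})
  -- the fixed-point condition applied to u
  have hufix := hfix_expand u (hfixg u huS)
  have huphi : CmapE n u - u = CmapE n a := by rw [← phiL_apply, hu]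
  have hEq : CmapE n a
      = (2 * dot a u / dot a a - (2 * dot b u / dot b b) * (2 * dot a b / dot a a)) •
          CmapE n a + (2 * dot b u / dot b b) • CmapE n b := by
    have h' := hufix
    rw [huphi] at h'
    exact h'
  set mu1 := 2 * dot a u / dot a a - (2 * dot b u / dot b b) * (2 * dot a b / dot a a) with hmu1
  set lam1 := 2 * dot b u / dot b b with hlam1
  have hCeq : CmapE n a = CmapE n (mu1 • a + lam1 • b) := by
    rw [show CmapE n (mu1 • a + lam1 • b) = CmapL n (mu1 • a + lam1 • b) from rfl,
      map_add, map_smul, map_smul]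
    exact hEq
  have haab : a = mu1 • a + lam1 • b := by
    have := congrArg (DmapE n) hCeq
    rwa [DmapE_CmapE, DmapE_CmapE] at this
  have hl0 : lam1 = 0 := by
    by_contra hl
    apply roots_not_proportional hs ht hst (lam1⁻¹ * (1 - mu1))
    funext k
    have hk := congrFun haab k
    simp only [Pi.add_apply, Pi.smul_apply, smul_eq_mul] at hk
    simp only [Pi.smul_apply, smul_eq_mul]
    have h3 : lam1 * b k = (1 - mu1) * a k := by linarith [hk]
    calc b k = lam1⁻¹ * (lam1 * b k) := by rw [inv_mul_cancel_left₀ hl]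
      _ = lam1⁻¹ * (1 - mu1) * a k := by rw [h3]; ring
  have hdbu : dot b u = 0 := by
    rw [hlam1] at hl0
    field_simp at hl0
    linarith
  -- conclude using the key identity
  have hua : u - DmapE n u = a := by
    have h2 := congrArg (DmapE n) huphi
    rwa [DmapE_sub, DmapE_CmapE, DmapE_CmapE] at h2
  calc bB n a b = bB n (u - DmapE n u) b := by rw [hua]
    _ = 2 * dot b u := bB_key (by omega) u b
    _ = 0 := by rw [hdbu]; ring
end
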